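/- arXiv:0907.0927 — 6 statements merged into one kernel-verified Lean document; each statement's English description precedes it below -/
import Mathlib

section
/- Let K ≥ 1 and let A and B be finite nonempty sets in some ambient group such that B is symmetric (B = B⁻¹), |A·B| ≤ K|B|, |B·A| ≤ K|B|, and |B²| ≤ K|A|. Then A is 2K-controlled by B²; that is, |B²| ≤ 2K|A| and there exists a set X with |X| ≤ 2K such that A ⊆ (X·B²) ∩ (B²·X). -/
open Finset Pointwise

theorem ruzsa_covering_lemma {G : Type*} [Group G] [DecidableEq G]
    (K : ℝ) (hK : 1 ≤ K) (A B : Finset G) (hA : A.Nonempty) (hB : B.Nonempty)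
    (hBsymm : B = B⁻¹)
    (hAB : ((A * B).card : ℝ) ≤ K * B.card)
    (hBA : ((B * A).card : ℝ) ≤ K * B.card)
    (hB2 : ((B * B).card : ℝ) ≤ K * A.card) :
    ((B * B).card : ℝ) ≤ 2 * K * A.card ∧
      ∃ X : Finset G, (X.card : ℝ) ≤ 2 * K ∧ A ⊆ X * (B * B) ∧ A ⊆ (B * B) * X := by
  have hBB : B / B = B * B := by
    rw [div_eq_mul_inv, ← hBsymm]
  obtain ⟨F₁, hF₁A, hF₁K, hAF₁⟩ := Finset.ruzsa_covering_mul hB hAB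
  -- second direction via inverses
  have hA'B' : ((A⁻¹ * B⁻¹).card : ℝ) ≤ K * B⁻¹.card := by
    rw [← mul_inv_rev, Finset.card_inv, Finset.card_inv]
    exact hBA
  obtain ⟨F₂, hF₂A, hF₂K, hAF₂⟩ := Finset.ruzsa_covering_mul (hB.inv) hA'B'
  have hA2 : A ⊆ (B * B) * F₂⁻¹ := by
    intro a ha
    have h1 : a⁻¹ ∈ F₂ * (B⁻¹ / B⁻¹) := hAF₂ (by simpa using ha)
    obtain ⟨f, hf, c, hc, hfc⟩ := Finset.mem_mul.1 h1
    have hc' : c⁻¹ ∈ B * B := by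
      obtain ⟨x, hx, y, hy, hxy⟩ := Finset.mem_div.1 hc
      have : c⁻¹ = y * x⁻¹ := by rw [← hxy]; simp [div_eq_mul_inv, mul_inv_rev]
      rw [this]
      exact Finset.mul_mem_mul (by rwa [hBsymm]) (by simpa using Finset.inv_mem_inv hx)
    have : a = c⁻¹ * f⁻¹ := by
      have := congrArg (·⁻¹) hfc; simpa [mul_comm] using this.symm
    rw [this]
    exact Finset.mul_mem_mul hc' (Finset.inv_mem_inv hf)
  refine ⟨by 
      have h0 : (0:ℝ) ≤ K * A.card := mul_nonneg (le_trans zero_le_one hK) (Nat.cast_nonneg _)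
      linarith, F₁ ∪ F₂⁻¹, ?_, ?_, ?_⟩
  · calc ((F₁ ∪ F₂⁻¹).card : ℝ) ≤ (F₁.card : ℝ) + (F₂⁻¹.card : ℝ) := by
          exact_mod_cast Finset.card_union_le _ _
      _ ≤ K + K := by rw [Finset.card_inv]; exact add_le_add hF₁K hF₂K
      _ = 2 * K := by ring
  · calc A ⊆ F₁ * (B / B) := hAF₁
      _ = F₁ * (B * B) := by rw [hBB]
      _ ⊆ (F₁ ∪ F₂⁻¹) * (B * B) := by
          exact Finset.mul_subset_mul_right (Finset.subset_union_left)
  · calc A ⊆ (B * B) * F₂⁻¹ := hA2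
      _ ⊆ (B * B) * (F₁ ∪ F₂⁻¹) := Finset.mul_subset_mul_left (Finset.subset_union_right)
end

section
/- There exists an absolute constant C > 0 with the following property. Let G be a group, let H ≤ G be a subgroup of finite index r, let K ≥ 1, and let A ⊆ G be a finite K-approximate group. Then there exists an (rK)^C-approximate group S ⊆ H which (rK)^C-controls A. -/
open Finset Pointwise

/-- `A` is a `K`-approximate group. -/
def IsApproxGroup {G : Type*} [Group G] [DecidableEq G] (K : ℝ) (A : Finset G) : Prop :=
  (∀ a ∈ A, a⁻¹ ∈ A) ∧ (1 : G) ∈ A ∧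
    ∃ X : Finset G, (∀ x ∈ X, x⁻¹ ∈ X) ∧ X ⊆ A * A ∧ (X.card : ℝ) ≤ K ∧ A * A ⊆ X * A

/-- `B` `K`-controls `A`. -/
def Controls {G : Type*} [Group G] [DecidableEq G] (K : ℝ) (B A : Finset G) : Prop :=
  (B.card : ℝ) ≤ K * A.card ∧ ∃ X : Finset G, (X.card : ℝ) ≤ K ∧ A ⊆ X * B ∧ A ⊆ B * X

/-- Choose one element of `P` per translate `t • A`. -/
lemma aux_choose_cover {G : Type*} [Group G] [DecidableEq G] (P T A : Finset G)
    (h : P ⊆ T * A) :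
    ∃ Z : Finset G, Z ⊆ P ∧ Z.card ≤ T.card ∧ ∀ p ∈ P, ∃ z ∈ Z, z⁻¹ * p ∈ A⁻¹ * A := by
  classical
  set g : G → G := fun t => if h' : (P ∩ t • A).Nonempty then h'.choose else 1 with hg
  refine ⟨(T.filter fun t => (P ∩ t • A).Nonempty).image g, ?_, ?_, ?_⟩
  · intro z hz
    obtain ⟨t, ht, rfl⟩ := Finset.mem_image.1 hz
    have h' := (Finset.mem_filter.1 ht).2
    have : g t ∈ P ∩ t • A := by simp only [hg, dif_pos h']; exact h'.choose_spec
    exact (Finset.mem_inter.1 this).1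
  · exact (Finset.card_image_le).trans (Finset.card_filter_le _ _)
  · intro p hp
    obtain ⟨t, ht, a, ha, rfl⟩ := Finset.mem_mul.1 (h hp)
    have hne : (P ∩ t • A).Nonempty :=
      ⟨t * a, Finset.mem_inter.2 ⟨hp, Finset.mem_smul_finset.2 ⟨a, ha, rfl⟩⟩⟩
    refine ⟨g t, Finset.mem_image.2 ⟨t, Finset.mem_filter.2 ⟨ht, hne⟩, rfl⟩, ?_⟩
    have hmem : g t ∈ P ∩ t • A := by simp only [hg, dif_pos hne]; exact hne.choose_spec
    obtain ⟨a', ha', hgt⟩ := Finset.mem_smul_finset.1 (Finset.mem_inter.1 hmem).2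
    have : (g t)⁻¹ * (t * a) = a'⁻¹ * a := by
      rw [← hgt]; simp [mul_assoc, smul_eq_mul]
    rw [this]
    exact Finset.mul_mem_mul (Finset.inv_mem_inv ha') ha

/-- Choose representatives of the fibers of `f` on `A`. -/
lemma aux_reps {α β : Type*} [DecidableEq α] [DecidableEq β] (A : Finset α) (f : α → β)
    (hA : A.Nonempty) :
    ∃ Z : Finset α, Z ⊆ A ∧ Z.card ≤ (A.image f).card ∧ ∀ a ∈ A, ∃ z ∈ Z, f z = f a := by
  classical
  set g : β → α := fun b => if h' : ∃ a ∈ A, f a = b then h'.choose else hA.choose with hg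
  refine ⟨(A.image f).image g, ?_, Finset.card_image_le, ?_⟩
  · intro z hz
    obtain ⟨b, hb, rfl⟩ := Finset.mem_image.1 hz
    obtain ⟨a, ha, hab⟩ := Finset.mem_image.1 hb
    have h' : ∃ a ∈ A, f a = b := ⟨a, ha, hab⟩
    simp only [hg, dif_pos h']
    exact h'.choose_spec.1
  · intro a ha
    have hb : f a ∈ A.image f := Finset.mem_image.2 ⟨a, ha, rfl⟩
    have h' : ∃ x ∈ A, f x = f a := ⟨a, ha, rfl⟩
    refine ⟨g (f a), Finset.mem_image.2 ⟨f a, hb, rfl⟩, ?_⟩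
    simp only [hg, dif_pos h']
    exact h'.choose_spec.2

set_option maxHeartbeats 2000000 in
theorem approx_group_passes_to_finite_index_subgroup :
    ∃ C : ℝ, 0 < C ∧
      ∀ (G : Type) [Group G] [DecidableEq G], ∀ (H : Subgroup G) (r : ℕ), 0 < r →
        H.index = r → ∀ K : ℝ, 1 ≤ K → ∀ A : Finset G, IsApproxGroup K A →
          ∃ S : Finset G, ↑S ⊆ (H : Set G) ∧
            IsApproxGroup (((r : ℝ) * K) ^ C) S ∧ Controls (((r : ℝ) * K) ^ C) S A := by
  classical
  refine ⟨4, by norm_num, ?_⟩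
  intro G _ _ H r hr hidx K hK A hA
  obtain ⟨hsymm, h1A, X₀, hX₀symm, hX₀sub, hX₀card, hcov⟩ := hA
  have h4 : ∀ x : ℝ, x ^ (4 : ℝ) = x ^ (4 : ℕ) := by
    intro x
    rw [show (4 : ℝ) = ((4 : ℕ) : ℝ) by norm_num, Real.rpow_natCast]
  have hKpos : (0 : ℝ) < K := lt_of_lt_of_le one_pos hK
  have hAinv : A⁻¹ = A := by
    ext a
    simp only [Finset.mem_inv']
    exact ⟨fun h => by simpa using hsymm _ h, fun h => hsymm _ h⟩
  rcases eq_or_lt_of_le (Nat.one_le_iff_ne_zero.2 hr.ne') with h1 | hr2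
  · -- r = 1 : H = ⊤, take S = A
    have hH : H = ⊤ := Subgroup.index_eq_one.1 (hidx ▸ h1.symm)
    have hKle : K ≤ ((r : ℝ) * K) ^ (4 : ℝ) := by
      rw [h4, ← h1]
      push_cast
      nlinarith [sq_nonneg K, sq_nonneg (K - 1)]
    have hmul1 : ({1} : Finset G) * A = A := by
      rw [show ({1} : Finset G) = 1 from rfl, one_mul]
    have hmul1' : A * ({1} : Finset G) = A := by
      rw [show ({1} : Finset G) = 1 from rfl, mul_one]
    refine ⟨A, by simp [hH], ⟨hsymm, h1A, X₀, hX₀symm, hX₀sub, hX₀card.trans hKle, hcov⟩,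
      ?_, {1}, ?_, by rw [hmul1], by rw [hmul1']⟩
    · have h1t : (1:ℝ) ≤ ((r : ℝ) * K) ^ (4 : ℝ) := le_trans hK hKle
      nlinarith [Nat.cast_nonneg (α := ℝ) A.card, h1t]
    · simpa using le_trans hK hKle
  · -- r ≥ 2
    have hr2' : (2 : ℝ) ≤ (r : ℝ) := by exact_mod_cast hr2
    have hrK : (1 : ℝ) ≤ (r : ℝ) * K := by nlinarith
    have hE : ((r : ℝ) * K) ^ (4:ℕ) = (r:ℝ)^(4:ℕ) * K^(4:ℕ) := by ring
    have hrpow : (16:ℝ) ≤ (r:ℝ)^(4:ℕ) := by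
      have := pow_le_pow_left₀ (by norm_num : (0:ℝ) ≤ 2) hr2' 4
      norm_num at this; linarith
    have hKpow : (1:ℝ) ≤ K^(4:ℕ) := by
      have := pow_le_pow_left₀ (zero_le_one) hK 4
      simpa using this
    have hK3pos : (0:ℝ) < K^(3:ℕ) := by positivity
    have hK34 : K^(3:ℕ) ≤ K^(4:ℕ) := by
      nlinarith [mul_nonneg hK3pos.le (sub_nonneg.2 hK)]
    have hKK4 : K ≤ K^(4:ℕ) := le_self_pow₀ hK (by norm_num)
    have hK4pos : (0:ℝ) < K^(4:ℕ) := by positivity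
    have h16K : (16:ℝ)*K^(4:ℕ) ≤ (r:ℝ)^(4:ℕ) * K^(4:ℕ) :=
      mul_le_mul_of_nonneg_right hrpow hK4pos.le
    have hKle4 : K ≤ (r:ℝ)^(4:ℕ) * K^(4:ℕ) := by linarith
    have hr14 : (1:ℝ) ≤ (r:ℝ)^(4:ℕ) := by linarith
    have h2r : (2:ℝ)*(r:ℝ) ≤ (r:ℝ)^(4:ℕ) * K^(4:ℕ) := by
      have ha1 : (2:ℝ)*(r:ℝ) ≤ (r:ℝ)^(2:ℕ) := by
        nlinarith [mul_nonneg (by linarith : (0:ℝ) ≤ (r:ℝ))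
          (by linarith : (0:ℝ) ≤ (r:ℝ) - 2)]
      have ha2 : (r:ℝ)^(2:ℕ) ≤ (r:ℝ)^(4:ℕ) := by
        nlinarith [mul_nonneg (sq_nonneg (r:ℝ))
          (by nlinarith : (0:ℝ) ≤ (r:ℝ)^(2:ℕ) - 1)]
      have ha3 : (r:ℝ)^(4:ℕ) ≤ (r:ℝ)^(4:ℕ) * K^(4:ℕ) := by
        nlinarith [mul_le_mul_of_nonneg_left hKpow (by positivity : (0:ℝ) ≤ (r:ℝ)^(4:ℕ))]
      linarith
    set S : Finset G := (A * A).filter (fun x => x ∈ H) with hS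
    have hSsub : S ⊆ A * A := Finset.filter_subset _ _
    have hSH : ∀ s ∈ S, s ∈ H := fun s hs => (Finset.mem_filter.1 hs).2
    have hmemS : ∀ x, x ∈ A * A → x ∈ H → x ∈ S := fun x h1 h2 =>
      Finset.mem_filter.2 ⟨h1, h2⟩
    have hSsymm : ∀ s ∈ S, s⁻¹ ∈ S := by
      intro s hs
      obtain ⟨a, ha, b, hb, rfl⟩ := Finset.mem_mul.1 (hSsub hs)
      refine hmemS _ ?_ (by simpa using (H.inv_mem (hSH _ hs)))
      rw [mul_inv_rev]
      exact Finset.mul_mem_mul (hsymm _ hb) (hsymm _ ha)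
    have h1S : (1 : G) ∈ S := hmemS _ (by simpa using Finset.mul_mem_mul h1A h1A) H.one_mem
    -- S*S ⊆ H
    have hSSH : ∀ p ∈ S * S, p ∈ H := by
      intro p hp
      obtain ⟨a, ha, b, hb, rfl⟩ := Finset.mem_mul.1 hp
      exact H.mul_mem (hSH _ ha) (hSH _ hb)
    -- A^4 ⊆ X₀^3 * A
    have hA3 : A * A * A ⊆ X₀ * X₀ * A := by
      calc A * A * A ⊆ (X₀ * A) * A := Finset.mul_subset_mul_right hcov
        _ = X₀ * (A * A) := by rw [mul_assoc]
        _ ⊆ X₀ * (X₀ * A) := Finset.mul_subset_mul_left hcov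
        _ = X₀ * X₀ * A := by rw [mul_assoc]
    have hA4 : (A * A) * (A * A) ⊆ (X₀ * X₀ * X₀) * A := by
      calc (A * A) * (A * A) = (A * A * A) * A := by simp only [mul_assoc]
        _ ⊆ (X₀ * X₀ * A) * A := Finset.mul_subset_mul_right hA3
        _ = (X₀ * X₀) * (A * A) := by rw [mul_assoc]
        _ ⊆ (X₀ * X₀) * (X₀ * A) := Finset.mul_subset_mul_left hcov
        _ = (X₀ * X₀ * X₀) * A := by simp only [mul_assoc]
    have hSS4 : S * S ⊆ (X₀ * X₀ * X₀) * A :=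
      (Finset.mul_subset_mul hSsub hSsub).trans hA4
    -- covering of S*S
    obtain ⟨Z, hZsub, hZcard, hZ⟩ := aux_choose_cover (S * S) (X₀ * X₀ * X₀) A hSS4
    have hZS : ∀ p ∈ S * S, ∃ z ∈ Z, p ∈ {z} * S := by
      intro p hp
      obtain ⟨z, hz, hzp⟩ := hZ p hp
      refine ⟨z, hz, ?_⟩
      have hmem : z⁻¹ * p ∈ S := by
        refine hmemS _ (by rwa [hAinv] at hzp) ?_
        exact H.mul_mem (H.inv_mem (hSSH _ (hZsub hz))) (hSSH _ hp)
      exact Finset.mem_mul.2 ⟨z, Finset.mem_singleton_self z, z⁻¹ * p, hmem,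
        by group⟩
    set Xap : Finset G := Z ∪ Z⁻¹ with hXap
    have hZcardR : (Z.card : ℝ) ≤ K ^ 3 := by
      have h1 : Z.card ≤ (X₀ * X₀ * X₀).card := hZcard
      have h2 : (X₀ * X₀ * X₀).card ≤ X₀.card * X₀.card * X₀.card :=
        le_trans Finset.card_mul_le
          (Nat.mul_le_mul_right _ Finset.card_mul_le)
      have h3 : (Z.card : ℝ) ≤ (X₀.card : ℝ) * X₀.card * X₀.card := by
        exact_mod_cast le_trans h1 h2
      have h0 : (0 : ℝ) ≤ (X₀.card : ℝ) := Nat.cast_nonneg _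
      have hKK : (X₀.card : ℝ) * X₀.card ≤ K * K :=
        mul_le_mul hX₀card hX₀card h0 hKpos.le
      have h5 : (X₀.card : ℝ) * X₀.card * X₀.card ≤ K * K * K :=
        mul_le_mul hKK hX₀card h0 (by positivity)
      have h6 : K * K * K = K ^ (3:ℕ) := by ring
      linarith
    -- the approximate-group structure for S
    have happrox : IsApproxGroup (((r : ℝ) * K) ^ (4:ℝ)) S := by
      refine ⟨hSsymm, h1S, Xap, ?_, ?_, ?_, ?_⟩
      · intro x hx
        rcases Finset.mem_union.1 hx with h | h
        · exact Finset.mem_union_right _ (by simpa using h)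
        · exact Finset.mem_union_left _ (by simpa using h)
      · intro x hx
        rcases Finset.mem_union.1 hx with h | h
        · exact hZsub h
        · rw [Finset.mem_inv'] at h
          have := hZsub h
          obtain ⟨a, ha, b, hb, hab⟩ := Finset.mem_mul.1 this
          have : x = b⁻¹ * a⁻¹ := by
            have := congrArg (·⁻¹) hab
            simpa [mul_inv_rev] using this.symm
          rw [this]
          exact Finset.mul_mem_mul (hSsymm _ hb) (hSsymm _ ha)
      · have hcard : (Xap.card : ℝ) ≤ 2 * K ^ 3 := by
          have h1 : Xap.card ≤ Z.card + Z⁻¹.card := Finset.card_union_le _ _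
          have h2 : Z⁻¹.card = Z.card := by simp
          have h3 : (Xap.card : ℝ) ≤ 2 * Z.card := by
            rw [h2] at h1
            exact_mod_cast le_trans h1 (by omega : Z.card + Z.card ≤ 2 * Z.card)
          nlinarith
        rw [h4, hE]
        linarith
      · intro p hp
        obtain ⟨z, hz, hmem⟩ := hZS p hp
        obtain ⟨_, hy, s, hs, rfl⟩ := Finset.mem_mul.1 hmem
        rw [Finset.mem_singleton.1 hy]
        exact Finset.mul_mem_mul (Finset.mem_union_left _ hz) hs
    -- control
    have hfin : Finite (G ⧸ H) := by
      have : H.FiniteIndex := ⟨by omega⟩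
      infer_instance
    have hfint : Fintype (G ⧸ H) := Fintype.ofFinite _
    have hcardQ : Fintype.card (G ⧸ H) = r := by
      rw [← Nat.card_eq_fintype_card, ← hidx]; rfl
    have hAne : A.Nonempty := ⟨1, h1A⟩
    obtain ⟨ZL, hZLsub, hZLcard, hZL⟩ :=
      aux_reps A (QuotientGroup.mk : G → G ⧸ H) hAne
    obtain ⟨ZR, hZRsub, hZRcard, hZR⟩ :=
      aux_reps A (fun a : G => (QuotientGroup.mk a⁻¹ : G ⧸ H)) hAne
    have himgL : (A.image (QuotientGroup.mk : G → G ⧸ H)).card ≤ r := by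
      have h := Finset.card_le_univ (A.image (QuotientGroup.mk : G → G ⧸ H))
      rwa [hcardQ] at h
    have himgR : (A.image (fun a : G => (QuotientGroup.mk a⁻¹ : G ⧸ H))).card ≤ r := by
      have h := Finset.card_le_univ (A.image (fun a : G => (QuotientGroup.mk a⁻¹ : G ⧸ H)))
      rwa [hcardQ] at h
    have hcontrol : Controls (((r : ℝ) * K) ^ (4:ℝ)) S A := by
      refine ⟨?_, ZL ∪ ZR, ?_, ?_, ?_⟩
      · -- |S| ≤ (rK)^4 |A|
        have h1 : S.card ≤ (X₀ * A).card := Finset.card_le_card (hSsub.trans hcov)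
        have h2 : ((X₀ * A).card : ℝ) ≤ (X₀.card : ℝ) * A.card := by
          exact_mod_cast Finset.card_mul_le
        have h3 : (S.card : ℝ) ≤ K * A.card := by
          have := (Nat.cast_le (α := ℝ)).2 h1
          nlinarith [Nat.cast_nonneg (α := ℝ) A.card]
        rw [h4, hE]
        have hh := mul_le_mul_of_nonneg_right hKle4 (Nat.cast_nonneg (α := ℝ) A.card)
        linarith
      · have h1 : ((ZL ∪ ZR).card : ℝ) ≤ (ZL.card : ℝ) + ZR.card := by
          exact_mod_cast Finset.card_union_le _ _
        have h2 : (ZL.card : ℝ) ≤ r := by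
          exact_mod_cast le_trans hZLcard himgL
        have h3 : (ZR.card : ℝ) ≤ r := by
          exact_mod_cast le_trans hZRcard himgR
        rw [h4, hE]
        linarith
      · -- A ⊆ (ZL ∪ ZR) * S
        intro a ha
        obtain ⟨z, hz, hfz⟩ := hZL a ha
        have hzH : z⁻¹ * a ∈ H := (QuotientGroup.eq).1 hfz
        have : z⁻¹ * a ∈ S :=
          hmemS _ (Finset.mul_mem_mul (hsymm _ (hZLsub hz)) ha) hzH
        exact Finset.mem_mul.2 ⟨z, Finset.mem_union_left _ hz, z⁻¹ * a, this, by group⟩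
      · -- A ⊆ S * (ZL ∪ ZR)
        intro a ha
        obtain ⟨z, hz, hfz⟩ := hZR a ha
        have hzH : a * z⁻¹ ∈ H := by
          have h' : z * a⁻¹ ∈ H := by
            have := (QuotientGroup.eq).1 hfz
            simpa using this
          simpa [mul_inv_rev] using H.inv_mem h'
        have : a * z⁻¹ ∈ S :=
          hmemS _ (Finset.mul_mem_mul ha (hsymm _ (hZRsub hz))) hzH
        exact Finset.mem_mul.2 ⟨a * z⁻¹, this, z, Finset.mem_union_right _ hz, by group⟩
    exact ⟨S, fun s hs => hSH s hs, happrox, hcontrol⟩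
end

section
/- There exists an absolute constant C > 0 with the following property. Let G and H be groups and let π : G → H be a group homomorphism. Let K ≥ 1 and let A ⊆ G be a finite nonempty set with |A³| ≤ K|A|. Then |π(A)³| ≤ K^C |π(A)|. -/
open Finset Pointwise

theorem small_tripling_preserved_under_homomorphisms :
    ∃ C : ℝ, 0 < C ∧
      ∀ (G H : Type) [Group G] [Group H] [DecidableEq G] [DecidableEq H],
        ∀ (π : G →* H) (K : ℝ), 1 ≤ K → ∀ A : Finset G, A.Nonempty →
          ((A * A * A).card : ℝ) ≤ K * A.card →
          (((A.image π) * (A.image π) * (A.image π)).card : ℝ) ≤ K ^ C * (A.image π).card := by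
  refine ⟨6, by norm_num, ?_⟩
  intro G H _ _ _ _ π K hK A hA hAAA
  classical
  have hK0 : (0:ℝ) < K := lt_of_lt_of_le one_pos hK
  -- |A^4| ≤ K^6 |A|
  have hA3 : (#(A ^ 3) : ℝ) ≤ K * #A := by
    rwa [show A ^ 3 = A * A * A by rw [pow_succ, pow_succ, pow_one]]
  have hA4 : (#(A ^ 4) : ℝ) ≤ K ^ (6:ℕ) * #A := by
    have h := Finset.small_alternating_pow_of_small_tripling (m := 4) (by norm_num) hA3
      (fun _ => 1) (fun _ => by norm_num)
    rw [show A ^ 4 = A * (A * (A * A)) by rw [pow_succ', pow_succ', pow_succ', pow_one]]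
    simpa using h
  set B := A.image π with hB
  have hBne : B.Nonempty := hA.image π
  -- big fiber
  have hsum : #A = ∑ t ∈ B, #{a ∈ A | π a = t} :=
    Finset.card_eq_sum_card_fiberwise (fun a ha => Finset.mem_image_of_mem π ha)
  obtain ⟨t, ht, hfib⟩ : ∃ t ∈ B, (#A : ℝ) / #B ≤ #{a ∈ A | π a = t} := by
    by_contra h
    push_neg at h
    have hlt : (#A : ℝ) < #B * ((#A : ℝ) / #B) := by
      calc (#A : ℝ) = ∑ t ∈ B, (#{a ∈ A | π a = t} : ℝ) := by exact_mod_cast hsum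
        _ < ∑ _t ∈ B, ((#A : ℝ) / #B) :=
            Finset.sum_lt_sum_of_nonempty hBne fun t ht => h t ht
        _ = #B * ((#A : ℝ) / #B) := by rw [Finset.sum_const, nsmul_eq_mul]
    rw [mul_div_cancel₀] at hlt
    · exact lt_irrefl _ hlt
    · exact_mod_cast hBne.card_ne_zero
  set F := {a ∈ A | π a = t} with hF
  have hFA : F ⊆ A := Finset.filter_subset _ _
  have hFne : (0:ℝ) < #F := by
    have : (0:ℝ) < (#A : ℝ) / #B := by
      apply div_pos <;> exact_mod_cast Finset.card_pos.mpr (by assumption)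
    exact lt_of_lt_of_le this hfib
  -- section of π on image of A^3
  have hsec : ∀ h : H, ∃ g : G, h ∈ (A * A * A).image π → g ∈ A * A * A ∧ π g = h := by
    intro h
    by_cases hh : h ∈ (A * A * A).image π
    · obtain ⟨g, hg, rfl⟩ := Finset.mem_image.mp hh
      exact ⟨g, fun _ => ⟨hg, rfl⟩⟩
    · exact ⟨1, fun h' => absurd h' hh⟩
  choose s hs using hsec
  -- injection (h, x) ↦ s h * x into A^4
  have hkey : #((A * A * A).image π) * #F ≤ #(A ^ 4) := by
    rw [← Finset.card_product]
    apply Finset.card_le_card_of_injOn (fun p => s p.1 * p.2)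
    · rintro ⟨h, x⟩ hp
      obtain ⟨hh, hx⟩ := Finset.mem_product.mp hp
      obtain ⟨hg, -⟩ := hs h hh
      rw [show A ^ 4 = A * A * A * A by rw [pow_succ, pow_succ, pow_succ, pow_one]]
      exact Finset.mul_mem_mul hg (hFA hx)
    · rintro ⟨h, x⟩ hp ⟨h', x'⟩ hp' heq
      obtain ⟨hh, hx⟩ := Finset.mem_product.mp hp
      obtain ⟨hh', hx'⟩ := Finset.mem_product.mp hp'
      obtain ⟨-, hπ⟩ := hs h hh
      obtain ⟨-, hπ'⟩ := hs h' hh'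
      have hxt : π x = t := (Finset.mem_filter.mp hx).2
      have hxt' : π x' = t := (Finset.mem_filter.mp hx').2
      simp only at heq
      have hH : h * t = h' * t := by
        have := congrArg π heq
        simpa [map_mul, hπ, hπ', hxt, hxt'] using this
      have hhh : h = h' := mul_right_cancel hH
      subst hhh
      have : x = x' := mul_left_cancel heq
      exact Prod.ext rfl this
  -- assemble
  have himg : (A * A * A).image π = B * B * B := by
    simp [hB, Finset.image_mul]
  have hAB : (#A : ℝ) ≤ #B * #F := by
    rw [div_le_iff₀ (by exact_mod_cast Finset.card_pos.mpr hBne)] at hfib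
    linarith [hfib]
  have hmain : (#(B * B * B) : ℝ) * #F ≤ K ^ (6:ℕ) * (#B * #F) := by
    calc (#(B * B * B) : ℝ) * #F = ((#((A * A * A).image π) * #F : ℕ) : ℝ) := by
          rw [himg]; push_cast; ring
      _ ≤ (#(A ^ 4) : ℝ) := by exact_mod_cast hkey
      _ ≤ K ^ (6:ℕ) * #A := hA4
      _ ≤ K ^ (6:ℕ) * (#B * #F) := by
          apply mul_le_mul_of_nonneg_left hAB (by positivity)
  have : (#(B * B * B) : ℝ) ≤ K ^ (6:ℕ) * #B := by
    have := (mul_le_mul_iff_of_pos_right hFne).mp (by linarith [hmain] : (#(B * B * B) : ℝ) * #F ≤ (K ^ (6:ℕ) * #B) * #F)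
    exact this
  calc (#(B * B * B) : ℝ) ≤ K ^ (6:ℕ) * #B := this
    _ = K ^ (6:ℝ) * #B := by rw [show (6:ℝ) = ((6:ℕ):ℝ) by norm_num, Real.rpow_natCast]
end

section
/- For every integer n ≥ 2 there exists a constant C_n > 0 with the following property. Let G be a group, let A ⊆ G be a finite symmetric set containing the identity with |A³| ≤ K|A| for some K ≥ 1, and let H ≤ G be a subgroup. Then |A² ∩ H| ≤ |Aⁿ ∩ H| ≤ K^{C_n}|A² ∩ H|. -/
open Finset Pointwise

theorem sumsets_and_intersections :
    ∀ n : ℕ, 2 ≤ n → ∃ C : ℝ, 0 < C ∧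
      ∀ (G : Type) [Group G] [DecidableEq G], ∀ (K : ℝ), 1 ≤ K →
        ∀ A : Finset G, A.Nonempty → (∀ a ∈ A, a⁻¹ ∈ A) → (1 : G) ∈ A →
          ((A * A * A).card : ℝ) ≤ K * A.card →
          ∀ H : Subgroup G,
            ((↑(A ^ 2) ∩ (H : Set G)).ncard : ℝ) ≤ ((↑(A ^ n) ∩ (H : Set G)).ncard : ℝ) ∧
            ((↑(A ^ n) ∩ (H : Set G)).ncard : ℝ) ≤ K ^ C * (↑(A ^ 2) ∩ (H : Set G)).ncard := by
  intro n hn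
  refine ⟨n, by positivity, ?_⟩
  intro G _ _ K hK A hA hsymm h1 h3 H
  classical
  have hAinv : A⁻¹ = A := by
    apply Finset.Subset.antisymm
    · intro a ha
      rw [Finset.mem_inv'] at ha
      simpa using hsymm _ ha
    · intro a ha
      rw [Finset.mem_inv']
      exact hsymm _ ha
  have hA3 : (#(A ^ 3) : ℝ) ≤ K * #A := by
    have : A ^ 3 = A * A * A := by rw [pow_succ, pow_two]
    rwa [this]
  -- finset versions of the intersections
  set B2 : Finset G := (A ^ 2).filter (fun x => x ∈ H) with hB2
  set Bn : Finset G := (A ^ n).filter (fun x => x ∈ H) with hBn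
  have e2 : (↑(A ^ 2) ∩ (H : Set G)) = ↑B2 := by
    ext x; simp [hB2, ← Finset.coe_pow]
  have en : (↑(A ^ n) ∩ (H : Set G)) = ↑Bn := by
    ext x; simp [hBn, ← Finset.coe_pow]
  rw [e2, en, Set.ncard_coe_finset, Set.ncard_coe_finset]
  have hsub : B2 ⊆ Bn := by
    apply Finset.filter_subset_filter
    exact Finset.pow_subset_pow_right h1 hn
  constructor
  · exact_mod_cast Finset.card_le_card hsub
  -- upper bound via Ruzsa covering
  have hKn : #(Bn * A) ≤ (K ^ (n - 1) : ℝ) * #A := by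
    calc (#(Bn * A) : ℝ) ≤ #(A ^ (n + 1)) := by
          have : Bn * A ⊆ A ^ (n + 1) := by
            rw [pow_succ]
            exact Finset.mul_subset_mul_right (Finset.filter_subset _ _)
          exact_mod_cast Finset.card_le_card this
      _ ≤ K ^ (n + 1 - 2) * #A :=
          Finset.small_pow_of_small_tripling (by omega) hA3 hAinv
      _ = K ^ (n - 1) * #A := rfl
  obtain ⟨F, hFBn, hFcard, hcov⟩ := Finset.ruzsa_covering_mul hA hKn
  have hdiv : A / A = A ^ 2 := by
    rw [div_eq_mul_inv, hAinv, pow_two]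
  have hcov2 : Bn ⊆ F * B2 := by
    intro x hx
    obtain ⟨f, hf, y, hy, rfl⟩ := Finset.mem_mul.1 (hcov hx)
    refine Finset.mem_mul.2 ⟨f, hf, y, ?_, rfl⟩
    have hfH : f ∈ H := (Finset.mem_filter.1 (hFBn hf)).2
    have hxH : f * y ∈ H := (Finset.mem_filter.1 hx).2
    have hyH : y ∈ H := by
      have := H.mul_mem (H.inv_mem hfH) hxH
      simpa [mul_assoc] using this
    rw [hB2, Finset.mem_filter]
    exact ⟨hdiv ▸ hy, hyH⟩
  have hcard : (#Bn : ℝ) ≤ #F * #B2 := by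
    calc (#Bn : ℝ) ≤ #(F * B2) := by exact_mod_cast Finset.card_le_card hcov2
      _ ≤ #F * #B2 := by exact_mod_cast Finset.card_mul_le
  have hB2pos : (0 : ℝ) ≤ #B2 := by positivity
  calc (#Bn : ℝ) ≤ #F * #B2 := hcard
    _ ≤ K ^ (n - 1) * #B2 := by gcongr
    _ ≤ K ^ (n : ℕ) * #B2 := by
        exact mul_le_mul_of_nonneg_right (pow_le_pow_right₀ hK (Nat.sub_le n 1)) hB2pos
    _ = K ^ (n : ℝ) * #B2 := by rw [Real.rpow_natCast]
end

section
/- Let s ≥ 1 and let G be a group generated by finitely many elements x₁, …, x_k. Suppose that every (s+1)-fold nested commutator [x_{i₁}, [x_{i₂}, [x_{i₃}, …, [x_{i_s}, x_{i_{s+1}}]…]]] of the generators (with indices i₁, …, i_{s+1} ∈ {1, …, k}, repetitions allowed) is equal to the identity. Then G is nilpotent of nilpotency class at most s. -/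
/-- The nested commutator `[y₁, [y₂, …, [y_{m-1}, y_m]…]]` of a list of group elements. -/
def nestedComm {G : Type*} [Group G] : List G → G
  | [] => 1
  | [a] => a
  | a :: b :: rest => a * nestedComm (b :: rest) * a⁻¹ * (nestedComm (b :: rest))⁻¹

lemma nestedComm_aux
    (s k : ℕ) (G : Type*) [Group G] (x : Fin k → G)
    (hgen : Subgroup.closure (Set.range x) = ⊤)
    (hcomm : ∀ l : List G, l.length = s + 1 → (∀ y ∈ l, y ∈ Set.range x) →
      nestedComm l = 1) :
    ∀ j, j ≤ s → ∀ l : List G, l.length = s + 1 - j →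
      (∀ y ∈ l, y ∈ Set.range x) → nestedComm l ∈ upperCentralSeries G j := by
  intro j
  induction j with
  | zero =>
    intro _ l hl hm
    rw [hcomm l (by simpa using hl) hm]
    exact one_mem _
  | succ j ih =>
    intro hj l hl hm
    have hjs : j ≤ s := Nat.le_of_succ_le hj
    set c := nestedComm l with hc
    -- every commutator [y, c] lies in Z_j
    have key : ∀ y : G, y * c * y⁻¹ * c⁻¹ ∈ upperCentralSeries G j := by
      have hgen' : ∀ g ∈ Set.range x, g * c * g⁻¹ * c⁻¹ ∈ upperCentralSeries G j := by
        intro g hg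
        have hlen : (g :: l).length = s + 1 - j := by
          simp only [List.length_cons, hl]
          omega
        have := ih hjs (g :: l) hlen (by
          intro y hy
          rcases List.mem_cons.mp hy with h | h
          · exact h ▸ hg
          · exact hm y h)
        -- unfold nestedComm (g :: l); l is nonempty since its length is s - j ≥ 1
        obtain ⟨b, rest, rfl⟩ : ∃ b rest, l = b :: rest := by
          rcases l with _ | ⟨b, rest⟩
          · exfalso; simp at hl; omega
          · exact ⟨b, rest, rfl⟩
        simpa [nestedComm] using this
      intro y
      have hy : y ∈ Subgroup.closure (Set.range x) := by rw [hgen]; trivial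
      induction hy using Subgroup.closure_induction with
      | mem g hg => exact hgen' g hg
      | one => simpa using one_mem _
      | mul a b _ _ ha hb =>
        have : a * b * c * (a * b)⁻¹ * c⁻¹ =
            (a * (b * c * b⁻¹ * c⁻¹) * a⁻¹) * (a * c * a⁻¹ * c⁻¹) := by group
        rw [this]
        exact mul_mem ((inferInstance : (Subgroup.upperCentralSeries G j).Normal).conj_mem _ hb a) ha
      | inv a _ ha =>
        have : a⁻¹ * c * a⁻¹⁻¹ * c⁻¹ = a⁻¹ * (a * c * a⁻¹ * c⁻¹)⁻¹ * a⁻¹⁻¹ := by group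
        rw [this]
        exact (inferInstance : (Subgroup.upperCentralSeries G j).Normal).conj_mem _ (inv_mem ha) a⁻¹
    refine mem_upperCentralSeries_succ_iff.mpr ?_
    intro y
    have := inv_mem (key y)
    have h2 : (y * c * y⁻¹ * c⁻¹)⁻¹ = c * y * c⁻¹ * y⁻¹ := by group
    rwa [h2] at this

theorem nilpotent_of_nested_commutators_trivial
    (s k : ℕ) (hs : 1 ≤ s) (G : Type*) [Group G] (x : Fin k → G)
    (hgen : Subgroup.closure (Set.range x) = ⊤)
    (hcomm : ∀ l : List G, l.length = s + 1 → (∀ y ∈ l, y ∈ Set.range x) →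
      nestedComm l = 1) :
    (⊤ : Subgroup G).lowerCentralSeries s = ⊥ := by
  have htop : upperCentralSeries G s = ⊤ := by
    rw [eq_top_iff, ← hgen, Subgroup.closure_le]
    rintro g ⟨i, rfl⟩
    have := nestedComm_aux s k G x hgen hcomm s le_rfl [x i] (by simp) (by
      intro y hy
      simp only [List.mem_singleton] at hy
      exact hy ▸ ⟨i, rfl⟩)
    simpa [nestedComm] using this
  haveI : Group.IsNilpotent G := ⟨⟨s, htop⟩⟩
  exact lowerCentralSeries_eq_bot_iff_nilpotencyClass_le.mpr
    (upperCentralSeries_eq_top_iff_nilpotencyClass_le.mp htop)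
end

section
/- Let G be a nilpotent subgroup of GL_n(ℂ). Then every semisimple (i.e. diagonalizable) element of G commutes with every unipotent element of G. -/
open Matrix

/-- An element of `GL n ℂ` is semisimple if it is diagonalizable over `ℂ`. -/
def IsSemisimpleElt {n : ℕ} (g : GL (Fin n) ℂ) : Prop :=
  ∃ P : GL (Fin n) ℂ, Matrix.IsDiag ((↑(P⁻¹ * g * P) : Matrix (Fin n) (Fin n) ℂ))

/-- An element of `GL n ℂ` is unipotent if `g - 1` is nilpotent. -/
def IsUnipotentElt {n : ℕ} (g : GL (Fin n) ℂ) : Prop :=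
  IsNilpotent ((↑g : Matrix (Fin n) (Fin n) ℂ) - 1)

namespace NilpGLProof

open scoped commutatorElement

open Polynomial

/-! ### Algebra preliminaries -/

/-- `x` is annihilated by a product of distinct linear factors. -/
def Diagble {A : Type*} [Ring A] [Algebra ℂ A] (x : A) : Prop :=
  ∃ s : Finset ℂ, (Polynomial.aeval x) (∏ a ∈ s, (X - C a)) = 0

section RingLemmas

variable {A : Type*} [Ring A] [Algebra ℂ A]

lemma aeval_commute (x : A) (p q : ℂ[X]) :
    Commute (Polynomial.aeval x p) (Polynomial.aeval x q) := by
  unfold Commute SemiconjBy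
  rw [← _root_.map_mul, mul_comm, _root_.map_mul]

lemma aeval_X_sub_C (x : A) (a : ℂ) : Polynomial.aeval x (X - C a) = x - a • 1 := by
  simp [Algebra.algebraMap_eq_smul_one]

lemma commute_with_unit_inv {y : A} {u : Aˣ} (h : Commute y (u : A)) :
    Commute y (↑u⁻¹ : A) :=
  h.units_inv_right

/-- Conjugation by a unit as an algebra equivalence. -/
def unitConj (p : Aˣ) : A ≃ₐ[ℂ] A where
  toFun x := p * x * ↑p⁻¹
  invFun x := ↑p⁻¹ * x * p
  left_inv x := by simp [mul_assoc]
  right_inv x := by simp [mul_assoc]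
  map_add' x y := by noncomm_ring
  map_mul' x y := by
    simp only [mul_assoc]
    rw [Units.inv_mul_cancel_left]
  commutes' c := by
    simp [Algebra.algebraMap_eq_smul_one, mul_smul_comm, smul_mul_assoc]

lemma unitConj_apply (p : Aˣ) (x : A) : unitConj p x = ↑p * x * ↑p⁻¹ := rfl

lemma diagble_map {B : Type*} [Ring B] [Algebra ℂ B] (φ : A →ₐ[ℂ] B) {x : A}
    (hx : Diagble x) : Diagble (φ x) := by
  obtain ⟨s, hs⟩ := hx
  exact ⟨s, by rw [Polynomial.aeval_algHom_apply, hs, map_zero]⟩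

lemma diagble_conj {x : A} (p : Aˣ) (hx : Diagble x) : Diagble ((p : A) * x * ↑p⁻¹) :=
  diagble_map (unitConj p).toAlgHom hx

/-- product of commuting unipotents is unipotent -/
lemma unip_mul {a b : A} (hab : Commute a b) (ha : IsNilpotent (a - 1))
    (hb : IsNilpotent (b - 1)) : IsNilpotent (a * b - 1) := by
  have h1 : Commute (a - 1) (b - 1) := (hab.sub_left (Commute.one_left b)).sub_right
    ((Commute.one_right a).sub_left (Commute.one_left 1))
  have key : a * b - 1 = (a - 1) * (b - 1) + ((a - 1) + (b - 1)) := by noncomm_ring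
  rw [key]
  have hmul : IsNilpotent ((a - 1) * (b - 1)) := h1.isNilpotent_mul_right ha
  have hadd : IsNilpotent ((a - 1) + (b - 1)) := h1.isNilpotent_add ha hb
  refine Commute.isNilpotent_add ?_ hmul hadd
  exact Commute.add_right (Commute.mul_left (Commute.refl _) h1.symm)
    (Commute.mul_left h1 (Commute.refl _))

lemma isUnit_aeval_prod_of_units {x : A} (t : Finset ℂ)
    (h : ∀ a ∈ t, IsUnit (Polynomial.aeval x (X - C a))) :
    IsUnit (Polynomial.aeval x (∏ a ∈ t, (X - C a))) := by
  classical
  induction t using Finset.induction_on with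
  | empty => simp
  | insert _ _ ha ih =>
    rename_i b t'
    rw [Finset.prod_insert ha, _root_.map_mul]
    exact (h b (Finset.mem_insert_self b t')).mul
      (ih fun a hat => h a (Finset.mem_insert_of_mem hat))

lemma isUnit_factor_of_unip {x : A} (hu : IsNilpotent (x - 1)) {a : ℂ} (ha : a ≠ 1) :
    IsUnit (x - a • 1) := by
  set c : ℂ := 1 - a with hc
  have hcne : c ≠ 0 := sub_ne_zero_of_ne (Ne.symm ha)
  have h1 : IsUnit (c⁻¹ • (x - 1) + 1) := by
    have hn : IsNilpotent (-(c⁻¹ • (x - 1))) := (hu.smul _).neg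
    have := hn.isUnit_one_sub
    rw [sub_neg_eq_add] at this
    rwa [add_comm] at this
  have h2 : IsUnit ((algebraMap ℂ A) c) := (isUnit_iff_ne_zero.mpr hcne).map (algebraMap ℂ A)
  have key : x - a • 1 = (algebraMap ℂ A) c * (c⁻¹ • (x - 1) + 1) := by
    rw [Algebra.algebraMap_eq_smul_one, smul_one_mul, smul_add, smul_smul,
      mul_inv_cancel₀ hcne, one_smul, hc, sub_smul, one_smul]
    abel
  rw [key]
  exact h2.mul h1

/-- a diagonalizable unipotent element is 1 -/
lemma eq_one_of_diagble_unip {x : A} (hd : Diagble x) (hu : IsNilpotent (x - 1)) : x = 1 := by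
  classical
  obtain ⟨s, hs⟩ := hd
  by_cases h1 : (1 : ℂ) ∈ s
  · rw [← Finset.prod_erase_mul s _ h1, _root_.map_mul] at hs
    have hunit : IsUnit (Polynomial.aeval x (∏ a ∈ s.erase 1, (X - C a))) := by
      refine isUnit_aeval_prod_of_units _ fun a hat => ?_
      rw [aeval_X_sub_C]
      exact isUnit_factor_of_unip hu (Finset.ne_of_mem_erase hat)
    obtain ⟨v, hv⟩ := hunit
    have := congrArg (fun y => (↑v⁻¹ : A) * y) hs
    simp only [mul_zero] at this
    rw [← mul_assoc, ← hv, Units.inv_mul, one_mul] at this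
    rw [aeval_X_sub_C, one_smul, sub_eq_zero] at this
    exact this
  · have hz : IsUnit (0 : A) := by
      rw [← hs]
      refine isUnit_aeval_prod_of_units _ fun a hat => ?_
      rw [aeval_X_sub_C]
      exact isUnit_factor_of_unip hu fun h => h1 (h ▸ hat)
    have h01 : (0 : A) = 1 := isUnit_zero_iff.mp hz
    have hx1 : x - 1 = 0 := by
      calc x - 1 = (x - 1) * 1 := (mul_one _).symm
      _ = (x - 1) * 0 := by rw [h01]
      _ = 0 := mul_zero _
    rw [sub_eq_zero] at hx1
    exact hx1

lemma aeval_mul_X (x : A) (a : ℂ) (m : ℕ) :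
    Polynomial.aeval x (C a * X ^ (m + 1)) = Polynomial.aeval x (C a * X ^ m) * x := by
  rw [pow_succ, ← mul_assoc, _root_.map_mul, Polynomial.aeval_X]

lemma sub_one_pow_eq_aeval (x : A) (m : ℕ) :
    (x - 1) ^ m = Polynomial.aeval x ((X - C (1 : ℂ)) ^ m) := by
  rw [map_pow, aeval_X_sub_C, one_smul]

end RingLemmas

section EndLemmas

variable {V : Type*} [AddCommGroup V] [Module ℂ V]

open Module LinearMap

lemma restrict_aeval_apply (p : ℂ[X]) (f : Module.End ℂ V) {U : Submodule ℂ V}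
    (hf : ∀ v ∈ U, f v ∈ U) (w : U) :
    ((Polynomial.aeval (f.restrict hf) p) w : V) = (Polynomial.aeval f p) (w : V) := by
  induction p using Polynomial.induction_on generalizing w with
  | C a =>
    simp [Polynomial.aeval_C, Module.algebraMap_end_apply]
  | add p q hp hq =>
    simp only [map_add, LinearMap.add_apply, Submodule.coe_add, hp, hq]
  | monomial m a ih =>
    rw [aeval_mul_X (f.restrict hf), aeval_mul_X f, Module.End.mul_apply, Module.End.mul_apply,
      ih ((f.restrict hf) w), LinearMap.restrict_coe_apply]

lemma mapQ_aeval_apply (p : ℂ[X]) (f : Module.End ℂ V) {U : Submodule ℂ V}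
    (hf : U ≤ U.comap f) (v : V) :
    (Polynomial.aeval (U.mapQ U f hf) p) (Submodule.Quotient.mk v)
      = Submodule.Quotient.mk ((Polynomial.aeval f p) v) := by
  induction p using Polynomial.induction_on generalizing v with
  | C a =>
    simp [Polynomial.aeval_C, Module.algebraMap_end_apply, Submodule.Quotient.mk_smul]
  | add p q hp hq =>
    simp only [map_add, LinearMap.add_apply, hp, hq, Submodule.Quotient.mk_add]
  | monomial m a ih =>
    rw [aeval_mul_X (U.mapQ U f hf), aeval_mul_X f, Module.End.mul_apply, Module.End.mul_apply,
      Submodule.mapQ_apply, ih (f v)]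

lemma diagble_restrict {f : Module.End ℂ V} {U : Submodule ℂ V}
    (hf : ∀ v ∈ U, f v ∈ U) (h : Diagble f) : Diagble (f.restrict hf) := by
  obtain ⟨s, hs⟩ := h
  refine ⟨s, ?_⟩
  apply LinearMap.ext
  intro w
  rw [LinearMap.zero_apply, ← Submodule.coe_eq_zero, restrict_aeval_apply, hs,
    LinearMap.zero_apply]

lemma unip_restrict {f : Module.End ℂ V} {U : Submodule ℂ V}
    (hf : ∀ v ∈ U, f v ∈ U) (h : IsNilpotent (f - 1)) : IsNilpotent (f.restrict hf - 1) := by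
  obtain ⟨m, hm⟩ := h
  refine ⟨m, ?_⟩
  rw [sub_one_pow_eq_aeval (f.restrict hf)]
  apply LinearMap.ext
  intro w
  rw [LinearMap.zero_apply, ← Submodule.coe_eq_zero, restrict_aeval_apply,
    ← sub_one_pow_eq_aeval f, hm, LinearMap.zero_apply]

lemma diagble_mapQ {f : Module.End ℂ V} {U : Submodule ℂ V}
    (hf : U ≤ U.comap f) (h : Diagble f) : Diagble (U.mapQ U f hf) := by
  obtain ⟨s, hs⟩ := h
  refine ⟨s, ?_⟩
  apply LinearMap.ext
  intro w
  obtain ⟨v, rfl⟩ := Submodule.Quotient.mk_surjective U w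
  rw [LinearMap.zero_apply, mapQ_aeval_apply, hs, LinearMap.zero_apply,
    Submodule.Quotient.mk_zero]

lemma unip_mapQ {f : Module.End ℂ V} {U : Submodule ℂ V}
    (hf : U ≤ U.comap f) (h : IsNilpotent (f - 1)) : IsNilpotent (U.mapQ U f hf - 1) := by
  obtain ⟨m, hm⟩ := h
  refine ⟨m, ?_⟩
  rw [sub_one_pow_eq_aeval (U.mapQ U f hf)]
  apply LinearMap.ext
  intro w
  obtain ⟨v, rfl⟩ := Submodule.Quotient.mk_surjective U w
  rw [LinearMap.zero_apply, mapQ_aeval_apply, ← sub_one_pow_eq_aeval f, hm,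
    LinearMap.zero_apply, Submodule.Quotient.mk_zero]

lemma ker_ne_bot_of_nilpotent {f : Module.End ℂ V} (hf : IsNilpotent f) (hne : f ≠ 0) :
    LinearMap.ker f ≠ ⊥ := by
  classical
  have hex : ∃ m, f ^ m = 0 := hf
  have hm : f ^ (Nat.find hex) = 0 := Nat.find_spec hex
  have hm0 : Nat.find hex ≠ 0 := by
    intro h0
    rw [h0, pow_zero] at hm
    apply hne
    apply LinearMap.ext
    intro v
    have := LinearMap.ext_iff.mp hm v
    simp only [Module.End.one_apply, LinearMap.zero_apply] at this
    simp [this]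
  obtain ⟨k, hkm⟩ := Nat.exists_eq_succ_of_ne_zero hm0
  have hk : f ^ k ≠ 0 := Nat.find_min hex (by omega)
  have : ∃ v : V, (f ^ k) v ≠ 0 := by
    by_contra hcon
    push_neg at hcon
    exact hk (LinearMap.ext fun v => by simp [hcon v])
  obtain ⟨v, hv⟩ := this
  rw [Submodule.ne_bot_iff]
  refine ⟨(f ^ k) v, ?_, hv⟩
  have h5 : f ^ (k + 1) = 0 := by rw [← Nat.succ_eq_add_one, ← hkm]; exact hm
  rw [LinearMap.mem_ker, ← Module.End.mul_apply, ← pow_succ', h5, LinearMap.zero_apply]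

end EndLemmas

/-- Key decomposition: eigenspaces of an operator annihilated by a product of distinct
linear factors span the whole space. -/
theorem decomp (s : Finset ℂ) : ∀ {V : Type*} [AddCommGroup V] [Module ℂ V]
    (f : Module.End ℂ V), (Polynomial.aeval f) (∏ a ∈ s, (X - C a)) = 0 →
    (⨆ a ∈ s, LinearMap.ker (f - a • 1)) = ⊤ := by
  classical
  induction s using Finset.induction_on with
  | empty =>
    intro V _ _ f h
    rw [Finset.prod_empty, _root_.map_one] at h
    rw [eq_top_iff]
    intro v _
    have hv : v = 0 := by
      have := LinearMap.ext_iff.mp h v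
      simpa using this
    rw [hv]
    exact zero_mem _
  | insert _ _ hnot ih =>
    rename_i a s'
    intro V _ _ f h
    rw [Finset.prod_insert hnot, _root_.map_mul] at h
    set π : ℂ[X] := ∏ b ∈ s', (X - C b) with hπ
    set P : Module.End ℂ V := Polynomial.aeval f π with hP
    set c : ℂ := ∏ b ∈ s', (a - b) with hc
    have hcne : c ≠ 0 := by
      rw [hc, Finset.prod_ne_zero_iff]
      intro b hb
      exact sub_ne_zero_of_ne (fun hab => hnot (hab ▸ hb))
    have heval : π.eval a = c := by
      rw [hπ, Polynomial.eval_prod]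
      apply Finset.prod_congr rfl
      intro b _
      simp
    obtain ⟨Q, hQ⟩ : (X - C a) ∣ (π - C c) := by
      rw [← heval]
      exact Polynomial.X_sub_C_dvd_sub_C_eval
    have hkey : P - algebraMap ℂ (Module.End ℂ V) c = (f - a • 1) * Polynomial.aeval f Q := by
      have := congrArg (Polynomial.aeval f) hQ
      rw [map_sub, _root_.map_mul, Polynomial.aeval_C, aeval_X_sub_C] at this
      exact this
    rw [eq_top_iff]
    intro v _
    set v₁ : V := c⁻¹ • (P v) with hv₁def
    have happ : P v - c • v = (f - a • 1) ((Polynomial.aeval f Q) v) := by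
      have := LinearMap.ext_iff.mp hkey v
      rw [LinearMap.sub_apply, Module.algebraMap_end_apply, Module.End.mul_apply] at this
      exact this
    have hfirst : (f - a • 1) * P = 0 := by
      rw [← aeval_X_sub_C f a]
      exact h
    have hsecond : P * (f - a • 1) = 0 := by
      have e1 : P * (f - a • 1) = Polynomial.aeval f (π * (X - C a)) := by
        rw [_root_.map_mul, aeval_X_sub_C, hP]
      rw [e1, mul_comm π, _root_.map_mul, ← hP, ← aeval_X_sub_C f a] at *
      exact hfirst
    have hv₁ : v₁ ∈ LinearMap.ker (f - a • 1) := by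
      rw [LinearMap.mem_ker, hv₁def, LinearMap.map_smul]
      have e2 : (f - a • 1) (P v) = ((f - a • 1) * P) v := rfl
      rw [e2, hfirst, LinearMap.zero_apply, smul_zero]
    set v₂ : V := v - v₁ with hv₂def
    have hv2 : v₂ = (-c⁻¹) • (P v - c • v) := by
      rw [hv₂def, hv₁def, neg_smul, smul_sub, smul_smul, inv_mul_cancel₀ hcne, one_smul,
        neg_sub]
    have hv₂eq : v₂ = (-c⁻¹) • ((f - a • 1) ((Polynomial.aeval f Q) v)) := by
      rw [hv2, happ]
    have hv₂U : v₂ ∈ LinearMap.ker P := by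
      rw [LinearMap.mem_ker, hv₂eq, LinearMap.map_smul]
      have e3 : P ((f - a • 1) ((Polynomial.aeval f Q) v))
          = ((P * (f - a • 1)) * Polynomial.aeval f Q) v := rfl
      rw [e3, hsecond, zero_mul, LinearMap.zero_apply, smul_zero]
    have hUf : ∀ u ∈ LinearMap.ker P, f u ∈ LinearMap.ker P := by
      intro u hu
      rw [LinearMap.mem_ker] at hu ⊢
      have h1 := aeval_commute f π X
      rw [Polynomial.aeval_X] at h1
      have hcomm : P * f = f * P := by rw [hP]; exact h1.eq
      calc P (f u) = (P * f) u := rfl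
      _ = (f * P) u := by rw [hcomm]
      _ = f (P u) := rfl
      _ = 0 := by rw [hu, map_zero]
    have hann' : (Polynomial.aeval (f.restrict hUf)) π = 0 := by
      apply LinearMap.ext
      intro w
      rw [LinearMap.zero_apply, ← Submodule.coe_eq_zero, restrict_aeval_apply]
      exact w.2
    have hihU := ih (f.restrict hUf) hann'
    have hv₂mem : v₂ ∈ ⨆ b ∈ s', LinearMap.ker (f - b • 1) := by
      have htop : (⟨v₂, hv₂U⟩ : LinearMap.ker P) ∈
          ⨆ b ∈ s', LinearMap.ker (f.restrict hUf - b • 1) := by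
        rw [hihU]; trivial
      have hmap := Submodule.mem_map_of_mem (f := (LinearMap.ker P).subtype) htop
      rw [Submodule.map_iSup] at hmap
      simp only [Submodule.map_iSup] at hmap
      have hmono : (⨆ b, ⨆ (_ : b ∈ s'),
          Submodule.map (LinearMap.ker P).subtype (LinearMap.ker (f.restrict hUf - b • 1)))
          ≤ ⨆ b ∈ s', LinearMap.ker (f - b • 1) := by
        refine iSup_mono fun b => iSup_mono fun hb => ?_
        intro z hz
        obtain ⟨w0, hw0, rfl⟩ := hz
        simp only [SetLike.mem_coe, LinearMap.mem_ker] at hw0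
        rw [LinearMap.mem_ker]
        have e4 := restrict_aeval_apply (X - C b) f hUf w0
        rw [aeval_X_sub_C, aeval_X_sub_C] at e4
        rw [Submodule.coe_subtype, ← e4, hw0]
        simp
      exact hmono hmap
    have hvsum : v = v₁ + v₂ := by rw [hv₂def]; abel
    rw [hvsum]
    refine add_mem ?_ ?_
    · exact le_iSup₂ (f := fun b (_ : b ∈ insert a s') => LinearMap.ker (f - b • 1)) a
        (Finset.mem_insert_self a s') hv₁
    · have hmono2 : (⨆ b ∈ s', LinearMap.ker (f - b • 1)) ≤
          ⨆ b ∈ insert a s', LinearMap.ker (f - b • 1) :=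
        biSup_mono fun b hb => Finset.mem_insert_of_mem hb
      exact hmono2 hv₂mem

/-- product of commuting diagonalizable endomorphisms is diagonalizable. -/
theorem diagble_mul {V : Type*} [AddCommGroup V] [Module ℂ V] {f g : Module.End ℂ V}
    (hf : Diagble f) (hg : Diagble g) (hfg : Commute f g) : Diagble (f * g) := by
  classical
  obtain ⟨s, hs⟩ := hf
  obtain ⟨t, ht⟩ := hg
  refine ⟨(s ×ˢ t).image fun pr => pr.1 * pr.2, ?_⟩
  set st := (s ×ˢ t).image fun pr : ℂ × ℂ => pr.1 * pr.2 with hst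
  rw [← LinearMap.ker_eq_top, ← top_le_iff, ← decomp s f hs]
  refine iSup₂_le fun a ha => ?_
  have hKg : ∀ w ∈ LinearMap.ker (f - a • 1), g w ∈ LinearMap.ker (f - a • 1) := by
    intro w hw
    rw [LinearMap.mem_ker] at hw ⊢
    have h1 : Commute g (f - a • 1) :=
      hfg.symm.sub_right ((Commute.one_right g).smul_right a)
    have hcomm : (f - a • 1) * g = g * (f - a • 1) := h1.symm.eq
    calc (f - a • 1) (g w) = ((f - a • 1) * g) w := rfl
    _ = (g * (f - a • 1)) w := by rw [hcomm]
    _ = g ((f - a • 1) w) := rfl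
    _ = 0 := by rw [hw, map_zero]
  have hann' : (Polynomial.aeval (g.restrict hKg)) (∏ b ∈ t, (X - C b)) = 0 := by
    apply LinearMap.ext
    intro w
    rw [LinearMap.zero_apply, ← Submodule.coe_eq_zero, restrict_aeval_apply, ht,
      LinearMap.zero_apply]
  have hdec := decomp t (g.restrict hKg) hann'
  intro w hw
  have htop : (⟨w, hw⟩ : LinearMap.ker (f - a • 1)) ∈
      ⨆ b ∈ t, LinearMap.ker (g.restrict hKg - b • 1) := by
    rw [hdec]; trivial
  have hsuff : (⨆ b ∈ t, LinearMap.ker (g.restrict hKg - b • 1)) ≤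
      Submodule.comap (LinearMap.ker (f - a • 1)).subtype
        (LinearMap.ker (Polynomial.aeval (f * g) (∏ c ∈ st, (X - C c)))) := by
    refine iSup₂_le fun b hb => ?_
    intro w0 hw0
    rw [Submodule.mem_comap, LinearMap.mem_ker, Submodule.coe_subtype]
    have hmemst : a * b ∈ st := Finset.mem_image.mpr ⟨(a, b), Finset.mem_product.mpr ⟨ha, hb⟩, rfl⟩
    rw [← Finset.prod_erase_mul st _ hmemst, _root_.map_mul, Module.End.mul_apply]
    have hgw : g (w0 : V) = b • (w0 : V) := by
      rw [LinearMap.mem_ker] at hw0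
      have e4 := restrict_aeval_apply (X - C b) g hKg w0
      rw [aeval_X_sub_C, aeval_X_sub_C] at e4
      rw [hw0] at e4
      have h3 : (g - b • 1) (w0 : V) = 0 := by rw [← e4]; rfl
      rw [LinearMap.sub_apply, LinearMap.smul_apply, Module.End.one_apply, sub_eq_zero] at h3
      exact h3
    have hfw : f (w0 : V) = a • (w0 : V) := by
      have hw0K : (w0 : V) ∈ LinearMap.ker (f - a • 1) := w0.2
      rw [LinearMap.mem_ker, LinearMap.sub_apply, LinearMap.smul_apply, Module.End.one_apply,
        sub_eq_zero] at hw0K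
      exact hw0K
    have hzero : (Polynomial.aeval (f * g) (X - C (a * b))) (w0 : V) = 0 := by
      rw [aeval_X_sub_C, LinearMap.sub_apply, LinearMap.smul_apply, Module.End.one_apply,
        Module.End.mul_apply, hgw, LinearMap.map_smul, hfw, smul_smul, mul_comm b a, sub_self]
    rw [hzero, map_zero]
  have hfin := hsuff htop
  rw [Submodule.mem_comap] at hfin
  exact hfin

/-- inverse of a diagonalizable automorphism is diagonalizable. -/
theorem diagble_inv {V : Type*} [AddCommGroup V] [Module ℂ V] {f : (Module.End ℂ V)ˣ}
    (hf : Diagble (f : Module.End ℂ V)) : Diagble ((↑f⁻¹ : Module.End ℂ V)) := by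
  classical
  obtain ⟨s, hs⟩ := hf
  refine ⟨(s.erase 0).image (·⁻¹), ?_⟩
  set t := (s.erase 0).image (·⁻¹) with hts
  rw [← LinearMap.ker_eq_top, ← top_le_iff, ← decomp s (f : Module.End ℂ V) hs]
  refine iSup₂_le fun a ha => ?_
  by_cases ha0 : a = 0
  · subst ha0
    intro v hv
    rw [LinearMap.mem_ker, zero_smul, sub_zero] at hv
    have hv0 : v = 0 := by
      have h1 : (↑(f⁻¹ * f) : Module.End ℂ V) v
          = (↑f⁻¹ : Module.End ℂ V) ((↑f : Module.End ℂ V) v) := by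
        rw [Units.val_mul]; rfl
      rw [inv_mul_cancel f, hv, map_zero, Units.val_one, Module.End.one_apply] at h1
      exact h1
    rw [hv0]
    exact zero_mem _
  · intro v hv
    rw [LinearMap.mem_ker, LinearMap.sub_apply, LinearMap.smul_apply, Module.End.one_apply,
      sub_eq_zero] at hv
    have hmem : a⁻¹ ∈ t := Finset.mem_image.mpr ⟨a, Finset.mem_erase.mpr ⟨ha0, ha⟩, rfl⟩
    rw [LinearMap.mem_ker, ← Finset.prod_erase_mul t _ hmem, _root_.map_mul,
      Module.End.mul_apply]
    have hfinv : (↑f⁻¹ : Module.End ℂ V) v = a⁻¹ • v := by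
      have h1 : (↑(f⁻¹ * f) : Module.End ℂ V) v
          = (↑f⁻¹ : Module.End ℂ V) ((↑f : Module.End ℂ V) v) := by
        rw [Units.val_mul]; rfl
      rw [inv_mul_cancel f, Units.val_one, Module.End.one_apply, hv, LinearMap.map_smul] at h1
      have h2 := congrArg (a⁻¹ • ·) h1
      simp only [smul_smul, inv_mul_cancel₀ ha0, one_smul] at h2
      exact h2.symm
    have hzero : (Polynomial.aeval (↑f⁻¹ : Module.End ℂ V) (X - C a⁻¹)) v = 0 := by
      rw [aeval_X_sub_C, LinearMap.sub_apply, LinearMap.smul_apply, Module.End.one_apply,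
        hfinv, sub_self]
    rw [hzero, map_zero]

/-! ### Group-theoretic preliminaries -/

section GroupLemmas

variable {Uu : Type*} [Group Uu]

/-- Lower central series of a subgroup, as subgroups of the ambient group. -/
def aLCS (G : Subgroup Uu) : ℕ → Subgroup Uu
  | 0 => G
  | (j+1) => ⁅aLCS G j, G⁆

lemma aLCS_succ (G : Subgroup Uu) (j : ℕ) : aLCS G (j+1) = ⁅aLCS G j, G⁆ := rfl

lemma aLCS_le (G : Subgroup Uu) : ∀ j, aLCS G j ≤ G := by
  intro j
  induction j with
  | zero => exact le_rfl
  | succ j ih =>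
    rw [aLCS_succ]
    rw [Subgroup.commutator_le]
    intro p hp q hq
    have hp' : p ∈ G := ih hp
    exact mul_mem (mul_mem (mul_mem hp' hq) (inv_mem hp')) (inv_mem hq)

lemma aLCS_succ_le_one (G : Subgroup Uu) (j : ℕ) : aLCS G (j+1) ≤ aLCS G 1 := by
  rw [aLCS_succ, aLCS_succ]
  exact Subgroup.commutator_mono (aLCS_le G j) le_rfl

lemma conj_map_self (G : Subgroup Uu) {x : Uu} (hx : x ∈ G) :
    Subgroup.map (MulAut.conj x).toMonoidHom G = G := by
  apply le_antisymm
  · intro y hy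
    obtain ⟨z, hz, rfl⟩ := hy
    simp only [MulEquiv.coe_toMonoidHom, MulAut.conj_apply]
    exact mul_mem (mul_mem hx hz) (inv_mem hx)
  · intro y hy
    refine ⟨x⁻¹ * y * x, ?_, ?_⟩
    · exact mul_mem (mul_mem (inv_mem hx) hy) hx
    · simp only [MulEquiv.coe_toMonoidHom, MulAut.conj_apply]
      group

lemma aLCS_conj_map (G : Subgroup Uu) {x : Uu} (hx : x ∈ G) :
    ∀ j, Subgroup.map (MulAut.conj x).toMonoidHom (aLCS G j) = aLCS G j := by
  intro j
  induction j with
  | zero => exact conj_map_self G hx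
  | succ j ih =>
    rw [aLCS_succ, Subgroup.map_commutator, ih, conj_map_self G hx]

lemma aLCS_conj_mem (G : Subgroup Uu) (j : ℕ) {x y : Uu} (hx : x ∈ G) (hy : y ∈ aLCS G j) :
    x * y * x⁻¹ ∈ aLCS G j := by
  rw [← aLCS_conj_map G hx j]
  exact ⟨y, hy, rfl⟩

lemma aLCS_map {Uv : Type*} [Group Uv] (f : Uu →* Uv) (H : Subgroup Uu) (j : ℕ) :
    aLCS (H.map f) j = (aLCS H j).map f := by
  induction j with
  | zero => rfl
  | succ j ih => rw [aLCS_succ, aLCS_succ, ih, Subgroup.map_commutator]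

lemma aLCS_le_map_lcs (G : Subgroup Uu) (j : ℕ) :
    aLCS G j ≤ Subgroup.map G.subtype (Subgroup.lowerCentralSeries (⊤ : Subgroup ↥G) j) := by
  induction j with
  | zero =>
    intro x hx
    exact ⟨⟨x, hx⟩, trivial, rfl⟩
  | succ j ih =>
    rw [aLCS_succ, lowerCentralSeries_succ]
    have h1 : G ≤ Subgroup.map G.subtype ⊤ := by
      intro x hx
      exact ⟨⟨x, hx⟩, trivial, rfl⟩
    calc ⁅aLCS G j, G⁆ ≤ ⁅Subgroup.map G.subtype (Subgroup.lowerCentralSeries (⊤ : Subgroup ↥G) j),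
        Subgroup.map G.subtype ⊤⁆ := Subgroup.commutator_mono ih h1
    _ = Subgroup.map G.subtype ⁅Subgroup.lowerCentralSeries (⊤ : Subgroup ↥G) j, ⊤⁆ :=
      (Subgroup.map_commutator _ _ _).symm

/-- The key class-reduction lemma: the subgroup generated by `g` together with the commutator
subgroup has commutators inside the next step of the series. -/
lemma crux (G : Subgroup Uu) {g : Uu} (hg : g ∈ G) :
    ⁅Subgroup.closure {g} ⊔ aLCS G 1, Subgroup.closure {g} ⊔ aLCS G 1⁆ ≤ aLCS G 2 := by
  have hUnion : Subgroup.closure {g} ⊔ aLCS G 1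
      = Subgroup.closure ({g} ∪ (aLCS G 1 : Set Uu)) := by
    rw [Subgroup.closure_union, Subgroup.closure_eq]
  set S : Set Uu := {g} ∪ (aLCS G 1 : Set Uu) with hS
  have hSsubG : S ⊆ (G : Set Uu) := by
    intro z hz
    rcases hz with hz | hz
    · rw [Set.mem_singleton_iff] at hz
      rw [hz]; exact hg
    · exact aLCS_le G 1 hz
  have hclG : Subgroup.closure S ≤ G := (Subgroup.closure_le G).mpr hSsubG
  rw [hUnion, Subgroup.commutator_le]
  intro a ha b hb
  induction ha, hb using Subgroup.closure_induction₂ with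
  | mem x y hx hy =>
    rcases hx with hx | hx <;> rcases hy with hy | hy
    · rw [Set.mem_singleton_iff] at hx hy
      rw [hx, hy, commutatorElement_self]
      exact one_mem _
    · rw [Set.mem_singleton_iff] at hx
      subst hx
      have h1 : ⁅y, x⁆ ∈ aLCS G 2 := Subgroup.commutator_mem_commutator hy hg
      rw [← commutatorElement_inv]
      exact inv_mem h1
    · rw [Set.mem_singleton_iff] at hy
      subst hy
      exact Subgroup.commutator_mem_commutator hx (hSsubG (Set.mem_union_left _ rfl))
    · exact Subgroup.commutator_mem_commutator hx (aLCS_le G 1 hy)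
  | one_left x hx => rw [commutatorElement_one_left]; exact one_mem _
  | one_right x hx => rw [commutatorElement_one_right]; exact one_mem _
  | mul_left x y z hx hy hz ihx ihy =>
    have hxG : x ∈ G := hclG hx
    have key : ⁅x * y, z⁆ = (x * ⁅y, z⁆ * x⁻¹) * ⁅x, z⁆ := by
      simp only [commutatorElement_def]
      group
    rw [key]
    exact mul_mem (aLCS_conj_mem G 2 hxG ihy) ihx
  | mul_right y z x hy hz hx ihy ihz =>
    have hyG : y ∈ G := hclG hy
    have key : ⁅x, y * z⁆ = ⁅x, y⁆ * (y * ⁅x, z⁆ * y⁻¹) := by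
      simp only [commutatorElement_def]
      group
    rw [key]
    exact mul_mem ihy (aLCS_conj_mem G 2 hyG ihz)
  | inv_left x y hx hy ih =>
    have hxG : x ∈ G := hclG hx
    have key : ⁅x⁻¹, y⁆ = x⁻¹ * ⁅x, y⁆⁻¹ * x := by
      simp only [commutatorElement_def]
      group
    rw [key]
    have := aLCS_conj_mem G 2 (inv_mem hxG) (inv_mem ih)
    simpa [mul_assoc] using this
  | inv_right x y hx hy ih =>
    have hyG : y ∈ G := hclG hy
    have key : ⁅x, y⁻¹⁆ = y⁻¹ * ⁅x, y⁆⁻¹ * y := by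
      simp only [commutatorElement_def]
      group
    rw [key]
    have := aLCS_conj_mem G 2 (inv_mem hyG) (inv_mem ih)
    simpa [mul_assoc] using this

end GroupLemmas

section UnitsLemmas

variable {A : Type*} [Ring A] [Algebra ℂ A]

lemma commute_val {a b : Aˣ} (h : Commute a b) : Commute (a : A) (b : A) := by
  have h2 := congrArg (Units.val) h
  rw [Units.val_mul, Units.val_mul] at h2
  exact h2

lemma unit_unip_inv {u : Aˣ} (hu : IsNilpotent ((u : A) - 1)) :
    IsNilpotent ((↑u⁻¹ : A) - 1) := by
  have key : (↑u⁻¹ : A) - 1 = -(↑u⁻¹ * ((u : A) - 1)) := by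
    rw [mul_sub, mul_one, Units.inv_mul]
    abel
  rw [key]
  rw [isNilpotent_neg_iff]
  have hcomm : Commute ((u : A) - 1) (↑u⁻¹ : A) := by
    have h1 : Commute ((u : A) - 1) (u : A) :=
      (Commute.refl (u : A)).sub_left (Commute.one_left _)
    exact h1.units_inv_right
  exact hcomm.symm.isNilpotent_mul_left hu

lemma unip_conj_unit {u : Aˣ} (x : Aˣ) (hu : IsNilpotent ((u : A) - 1)) :
    IsNilpotent (((x * u * x⁻¹ : Aˣ) : A) - 1) := by
  have key : ((x * u * x⁻¹ : Aˣ) : A) - 1 = (unitConj x) ((u : A) - 1) := by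
    rw [map_sub, _root_.map_one, unitConj_apply, Units.val_mul, Units.val_mul]
  rw [key]
  exact hu.map (unitConj x).toAlgHom.toRingHom

/-- Lemma A♭ : a commutator against a unipotent element which commutes with the unipotent
element is itself unipotent. -/
lemma unip_commutator {x u : Aˣ} (hu : IsNilpotent ((u : A) - 1))
    (h : Commute ⁅x, u⁆ u) : IsNilpotent (((⁅x, u⁆ : Aˣ) : A) - 1) := by
  have hdef : ⁅x, u⁆ = (x * u * x⁻¹) * u⁻¹ := by
    rw [commutatorElement_def]
  have hconj : IsNilpotent (((x * u * x⁻¹ : Aˣ) : A) - 1) := unip_conj_unit x hu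
  have hinv : IsNilpotent ((↑u⁻¹ : A) - 1) := unit_unip_inv hu
  have hcomm : Commute (x * u * x⁻¹ : Aˣ) u := by
    have h2 : x * u * x⁻¹ = ⁅x, u⁆ * u := by rw [hdef]; group
    rw [h2]
    exact h.mul_left (Commute.refl u)
  have hcomm2 : Commute ((x * u * x⁻¹ : Aˣ) : A) (↑u⁻¹ : A) :=
    (commute_val hcomm).units_inv_right
  have := unip_mul hcomm2 hconj hinv
  rw [hdef, Units.val_mul]
  exact this

/-- Lemma A : a commutator against a semisimple element which commutes with the semisimple
element is semisimple (End version). -/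
lemma diagble_commutator {V : Type*} [AddCommGroup V] [Module ℂ V]
    {x g : (Module.End ℂ V)ˣ} (hg : Diagble ((g : Module.End ℂ V)))
    (h : Commute ⁅x, g⁆ g) : Diagble ((⁅x, g⁆ : (Module.End ℂ V)ˣ) : Module.End ℂ V) := by
  have hdef : ⁅x, g⁆ = (x * g * x⁻¹) * g⁻¹ := by
    rw [commutatorElement_def]
  have hconj : Diagble (((x * g * x⁻¹ : (Module.End ℂ V)ˣ) : Module.End ℂ V)) := by
    have : (((x * g * x⁻¹ : (Module.End ℂ V)ˣ)) : Module.End ℂ V)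
        = (x : Module.End ℂ V) * (g : Module.End ℂ V) * (↑x⁻¹ : Module.End ℂ V) := by
      rw [Units.val_mul, Units.val_mul]
    rw [this]
    exact diagble_conj x hg
  have hinv : Diagble ((↑g⁻¹ : Module.End ℂ V)) := diagble_inv hg
  have hcomm : Commute (x * g * x⁻¹ : (Module.End ℂ V)ˣ) g := by
    have h2 : x * g * x⁻¹ = ⁅x, g⁆ * g := by rw [hdef]; group
    rw [h2]
    exact h.mul_left (Commute.refl g)
  have hcomm2 : Commute (((x * g * x⁻¹ : (Module.End ℂ V)ˣ)) : Module.End ℂ V)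
      ((↑g⁻¹ : Module.End ℂ V)) := (commute_val hcomm).units_inv_right
  rw [hdef, Units.val_mul]
  exact diagble_mul hconj hinv hcomm2

end UnitsLemmas

/-! ### Stabilizer of a submodule and restriction/quotient homomorphisms -/

section Stab

variable {V : Type*} [AddCommGroup V] [Module ℂ V] [FiniteDimensional ℂ V]
  (W : Submodule ℂ V)

/-- The subgroup of automorphisms preserving `W`. -/
def stabSub : Subgroup (Module.End ℂ V)ˣ where
  carrier := {x | ∀ w ∈ W, (x : Module.End ℂ V) w ∈ W}
  one_mem' := by
    intro w hw
    simpa using hw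
  mul_mem' := by
    intro x y hx hy w hw
    rw [Units.val_mul, Module.End.mul_apply]
    exact hx _ (hy _ hw)
  inv_mem' := by
    intro x hx w hw
    have hinj : Function.Injective ((x : Module.End ℂ V)) := by
      intro a b hab
      have h1 := congrArg (↑x⁻¹ : Module.End ℂ V) hab
      rw [← Module.End.mul_apply, ← Module.End.mul_apply, ← Units.val_mul, inv_mul_cancel x,
        Units.val_one, Module.End.one_apply, Module.End.one_apply] at h1
      exact h1
    have hle : Submodule.map (x : Module.End ℂ V) W ≤ W := by
      rintro z ⟨w', hw', rfl⟩
      exact hx _ hw'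
    have heq : Submodule.map (x : Module.End ℂ V) W = W := by
      apply Submodule.eq_of_le_of_finrank_le hle
      exact le_of_eq (LinearEquiv.finrank_eq (Submodule.equivMapOfInjective _ hinj W))
    have hw2 : w ∈ Submodule.map (x : Module.End ℂ V) W := heq.symm ▸ hw
    obtain ⟨w', hw', rfl⟩ := hw2
    have : (↑x⁻¹ : Module.End ℂ V) ((x : Module.End ℂ V) w') = w' := by
      rw [← Module.End.mul_apply, ← Units.val_mul, inv_mul_cancel x, Units.val_one,
        Module.End.one_apply]
    rw [this]
    exact hw'

lemma mem_stabSub {x : (Module.End ℂ V)ˣ} :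
    x ∈ stabSub W ↔ ∀ w ∈ W, (x : Module.End ℂ V) w ∈ W := Iff.rfl

/-- restriction of a stabilizing automorphism to `W`. -/
def resF (x : ↥(stabSub W)) : Module.End ℂ ↥W :=
  LinearMap.restrict ((x : (Module.End ℂ V)ˣ) : Module.End ℂ V) ((mem_stabSub W).mp x.2)

lemma resF_apply (x : ↥(stabSub W)) (w : ↥W) :
    ((resF W x w : ↥W) : V) = ((x : (Module.End ℂ V)ˣ) : Module.End ℂ V) (w : V) :=
  LinearMap.restrict_coe_apply _ _ _

lemma resF_mul (x y : ↥(stabSub W)) : resF W (x * y) = resF W x * resF W y := by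
  apply LinearMap.ext
  intro w
  apply Subtype.ext
  rw [Module.End.mul_apply, resF_apply, resF_apply, resF_apply]
  rw [Subgroup.coe_mul, Units.val_mul, Module.End.mul_apply]

lemma resF_one : resF W 1 = 1 := by
  apply LinearMap.ext
  intro w
  apply Subtype.ext
  rw [resF_apply]
  simp

/-- the restriction homomorphism to `GL(W)`. -/
def resHom : ↥(stabSub W) →* (Module.End ℂ ↥W)ˣ :=
  MonoidHom.mk' (fun x => Units.mk (resF W x) (resF W x⁻¹)
    (by rw [← resF_mul, mul_inv_cancel, resF_one])
    (by rw [← resF_mul, inv_mul_cancel, resF_one]))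
    (fun a b => by
      apply Units.ext
      show resF W (a * b) = resF W a * resF W b
      exact resF_mul W a b)

lemma resHom_val (x : ↥(stabSub W)) : ((resHom W x : (Module.End ℂ ↥W)ˣ) : Module.End ℂ ↥W)
    = resF W x := rfl

/-- quotient action of a stabilizing automorphism. -/
def quotF (x : ↥(stabSub W)) : Module.End ℂ (V ⧸ W) :=
  Submodule.mapQ W W ((x : (Module.End ℂ V)ˣ) : Module.End ℂ V)
    (fun w hw => (mem_stabSub W).mp x.2 w hw)

lemma quotF_apply (x : ↥(stabSub W)) (v : V) :
    quotF W x (Submodule.Quotient.mk v)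
      = Submodule.Quotient.mk (((x : (Module.End ℂ V)ˣ) : Module.End ℂ V) v) :=
  Submodule.mapQ_apply _ _ _ _

lemma quotF_mul (x y : ↥(stabSub W)) : quotF W (x * y) = quotF W x * quotF W y := by
  apply LinearMap.ext
  intro z
  obtain ⟨v, rfl⟩ := Submodule.Quotient.mk_surjective W z
  rw [Module.End.mul_apply, quotF_apply, quotF_apply, quotF_apply]
  rw [Subgroup.coe_mul, Units.val_mul, Module.End.mul_apply]

lemma quotF_one : quotF W 1 = 1 := by
  apply LinearMap.ext
  intro z
  obtain ⟨v, rfl⟩ := Submodule.Quotient.mk_surjective W z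
  rw [quotF_apply]
  simp

/-- the quotient homomorphism to `GL(V/W)`. -/
def quotHom : ↥(stabSub W) →* (Module.End ℂ (V ⧸ W))ˣ :=
  MonoidHom.mk' (fun x => Units.mk (quotF W x) (quotF W x⁻¹)
    (by rw [← quotF_mul, mul_inv_cancel, quotF_one])
    (by rw [← quotF_mul, inv_mul_cancel, quotF_one]))
    (fun a b => by
      apply Units.ext
      show quotF W (a * b) = quotF W a * quotF W b
      exact quotF_mul W a b)

lemma quotHom_val (x : ↥(stabSub W)) :
    ((quotHom W x : (Module.End ℂ (V ⧸ W))ˣ) : Module.End ℂ (V ⧸ W)) = quotF W x := rfl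

end Stab

section GroupLemmas2

variable {Uu : Type*} [Group Uu]

lemma aLCS_map_le_of_le {T : Subgroup Uu} (K : Subgroup ↥T) {G : Subgroup Uu}
    (h : Subgroup.map T.subtype K ≤ G) : ∀ j, Subgroup.map T.subtype (aLCS K j) ≤ aLCS G j := by
  intro j
  induction j with
  | zero => exact h
  | succ j ih =>
    rw [aLCS_succ, aLCS_succ, Subgroup.map_commutator]
    exact Subgroup.commutator_mono ih h

lemma aLCS_eq_bot_of_map {T : Subgroup Uu} (K : Subgroup ↥T) {G : Subgroup Uu}
    (h : Subgroup.map T.subtype K ≤ G) (c : ℕ) (hc : aLCS G c = ⊥) : aLCS K c = ⊥ := by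
  have h1 := aLCS_map_le_of_le K h c
  rw [hc] at h1
  have h2 : Subgroup.map T.subtype (aLCS K c) = ⊥ := le_bot_iff.mp h1
  rw [Subgroup.map_eq_bot_iff, Subgroup.ker_subtype] at h2
  exact le_bot_iff.mp h2

/-- iterated commutators with a fixed element. -/
def chain {G : Type*} [Group G] (g u : G) : ℕ → G
  | 0 => g
  | (j + 1) => ⁅chain g u j, u⁆

lemma chain_zero {G : Type*} [Group G] (g u : G) : chain g u 0 = g := rfl

lemma chain_succ {G : Type*} [Group G] (g u : G) (j : ℕ) :
    chain g u (j + 1) = ⁅chain g u j, u⁆ := rfl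

end GroupLemmas2

/-! ### The main induction -/

theorem theta : ∀ (N : ℕ) (V : Type) (_ : AddCommGroup V) (_ : Module ℂ V)
    (_ : FiniteDimensional ℂ V), Module.finrank ℂ V ≤ N →
    ∀ (c : ℕ) (G : Subgroup (Module.End ℂ V)ˣ), aLCS G c = ⊥ →
    ∀ g u : (Module.End ℂ V)ˣ, g ∈ G → u ∈ G →
    Diagble ((g : (Module.End ℂ V)ˣ) : Module.End ℂ V) →
    IsNilpotent (((u : (Module.End ℂ V)ˣ) : Module.End ℂ V) - 1) → Commute g u := by
  intro N
  induction N with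
  | zero =>
    intro V _ _ _ hN c G hc g u hgG huG hgs huu
    have h0 : Module.finrank ℂ V = 0 := Nat.le_zero.mp hN
    have hsing : Subsingleton V := by
      rw [Module.finrank_zero_iff] at h0
      exact h0
    have hsingE : Subsingleton (Module.End ℂ V) :=
      ⟨fun f g => LinearMap.ext fun v => Subsingleton.elim _ _⟩
    exact Units.ext (Subsingleton.elim _ _)
  | succ N ihN =>
    intro V instAG instM instFD hN c
    induction c with
    | zero =>
      intro G hc g u hgG huG hgs huu
      have hg1 : g ∈ (⊥ : Subgroup (Module.End ℂ V)ˣ) := hc ▸ hgG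
      rw [Subgroup.mem_bot] at hg1
      rw [hg1]
      exact Commute.one_left u
    | succ c ihc =>
      intro G hc g u hgG huG hgs huu
      classical
      -- the dual chain, iterated commutators with u
      have hq0 : chain g u 0 = g := chain_zero g u
      have hqs : ∀ j, chain g u (j + 1) = ⁅chain g u j, u⁆ := chain_succ g u
      have hqmem : ∀ j, chain g u j ∈ aLCS G j := by
        intro j
        induction j with
        | zero => exact hgG
        | succ j ih =>
          rw [hqs j, aLCS_succ]
          exact Subgroup.commutator_mem_commutator ih huG
      have hqc : chain g u (c + 1) = 1 := by
        have h1 := hqmem (c + 1)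
        rw [hc] at h1
        exact Subgroup.mem_bot.mp h1
      have hex : ∃ j, chain g u j = 1 := ⟨c + 1, hqc⟩
      haveI : DecidablePred fun j => chain g u j = 1 := Classical.decPred _
      have hfind : chain g u (Nat.find hex) = 1 := Nat.find_spec hex
      have hrle : Nat.find hex ≤ c + 1 := Nat.find_le hqc
      rcases hN3 : Nat.find hex with _ | r1
      · rw [hN3, hq0] at hfind
        rw [hfind]
        exact Commute.one_left u
      rcases hN4 : r1 with _ | r'
      · rw [hN4] at hN3
        rw [hN3] at hfind
        rw [hqs 0, hq0] at hfind
        exact commutatorElement_eq_one_iff_commute.mp hfind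
      rw [hN4] at hN3
      -- main case : the chain dies at stage r' + 2 ≥ 2
      rw [hN3] at hfind hrle
      have hk1 : chain g u (r' + 1) ≠ 1 := Nat.find_min hex (by omega)
      set k : (Module.End ℂ V)ˣ := chain g u (r' + 1) with hkdef
      have hkmem : k ∈ aLCS G (r' + 1) := hqmem _
      have hcku : Commute k u := by
        apply commutatorElement_eq_one_iff_commute.mp
        rw [← hqs (r' + 1)]
        exact hfind
      have hkunip : IsNilpotent ((k : Module.End ℂ V) - 1) := by
        have : Commute ⁅chain g u r', u⁆ u := by rw [← hqs r']; exact hcku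
        have h2 := unip_commutator huu this
        rw [← hqs r'] at h2
        exact h2
      -- class reduction : commute g with k
      set Hg : Subgroup (Module.End ℂ V)ˣ := Subgroup.closure {g} ⊔ aLCS G 1 with hHgdef
      have hgHg : g ∈ Hg := Subgroup.mem_sup_left (Subgroup.subset_closure rfl)
      have hkHg : k ∈ Hg := Subgroup.mem_sup_right (aLCS_succ_le_one G r' hkmem)
      have hHgle : Hg ≤ G := by
        rw [hHgdef]
        refine sup_le ?_ (aLCS_le G 1)
        rw [Subgroup.closure_le]
        intro z hz
        rw [Set.mem_singleton_iff] at hz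
        rw [hz]
        exact hgG
      have hB1 : aLCS Hg 1 ≤ aLCS G 2 := crux G hgG
      have hBj : ∀ j, aLCS Hg (j + 1) ≤ aLCS G (j + 2) := by
        intro j
        induction j with
        | zero => exact hB1
        | succ j ih =>
          rw [aLCS_succ, aLCS_succ (G := G)]
          exact Subgroup.commutator_mono ih hHgle
      have hHgcert : aLCS Hg c = ⊥ := by
        obtain ⟨c0, rfl⟩ : ∃ c0, c = c0 + 1 := ⟨c - 1, by omega⟩
        have := hBj c0
        rw [hc] at this
        exact le_bot_iff.mp this
      have hgk : Commute g k := ihc Hg hHgcert g k hgHg hkHg hgs hkunip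
      -- the invariant subspace W = Fix(k)
      set W : Submodule ℂ V := LinearMap.ker ((k : Module.End ℂ V) - 1) with hWdef
      have hkne : (k : Module.End ℂ V) - 1 ≠ 0 := by
        intro h0
        apply hk1
        apply Units.ext
        rw [sub_eq_zero] at h0
        exact h0
      have hWbot : W ≠ ⊥ := ker_ne_bot_of_nilpotent hkunip hkne
      have hWtop : W ≠ ⊤ := fun h => hkne (LinearMap.ker_eq_top.mp h)
      have hgW : g ∈ stabSub W := by
        rw [mem_stabSub]
        intro w hw
        rw [hWdef, LinearMap.mem_ker] at hw ⊢
        have hcval : Commute ((g : (Module.End ℂ V)ˣ) : Module.End ℂ V)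
            ((k : (Module.End ℂ V)ˣ) : Module.End ℂ V) := commute_val hgk
        have hcomm : ((k : Module.End ℂ V) - 1) * (g : Module.End ℂ V)
            = (g : Module.End ℂ V) * ((k : Module.End ℂ V) - 1) :=
          ((hcval.symm).sub_left (Commute.one_left _)).eq
        calc ((k : Module.End ℂ V) - 1) ((g : Module.End ℂ V) w)
            = (((k : Module.End ℂ V) - 1) * (g : Module.End ℂ V)) w := rfl
        _ = ((g : Module.End ℂ V) * ((k : Module.End ℂ V) - 1)) w := by rw [hcomm]
        _ = (g : Module.End ℂ V) (((k : Module.End ℂ V) - 1) w) := rfl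
        _ = 0 := by rw [hw, map_zero]
      have huW : u ∈ stabSub W := by
        rw [mem_stabSub]
        intro w hw
        rw [hWdef, LinearMap.mem_ker] at hw ⊢
        have hcval : Commute ((u : (Module.End ℂ V)ˣ) : Module.End ℂ V)
            ((k : (Module.End ℂ V)ˣ) : Module.End ℂ V) := commute_val hcku.symm
        have hcomm : ((k : Module.End ℂ V) - 1) * (u : Module.End ℂ V)
            = (u : Module.End ℂ V) * ((k : Module.End ℂ V) - 1) :=
          ((hcval.symm).sub_left (Commute.one_left _)).eq
        calc ((k : Module.End ℂ V) - 1) ((u : Module.End ℂ V) w)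
            = (((k : Module.End ℂ V) - 1) * (u : Module.End ℂ V)) w := rfl
        _ = ((u : Module.End ℂ V) * ((k : Module.End ℂ V) - 1)) w := by rw [hcomm]
        _ = (u : Module.End ℂ V) (((k : Module.End ℂ V) - 1) w) := rfl
        _ = 0 := by rw [hw, map_zero]
      -- the subgroup generated by g and u inside the stabilizer
      set gS : ↥(stabSub W) := ⟨g, hgW⟩ with hgSdef
      set uS : ↥(stabSub W) := ⟨u, huW⟩ with huSdef
      set K : Subgroup ↥(stabSub W) := Subgroup.closure {gS, uS} with hKdef
      have hgK : gS ∈ K := Subgroup.subset_closure (Set.mem_insert _ _)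
      have huK : uS ∈ K := Subgroup.subset_closure (Set.mem_insert_of_mem _ rfl)
      have hKmap : Subgroup.map (stabSub W).subtype K ≤ G := by
        rw [hKdef, MonoidHom.map_closure]
        rw [Subgroup.closure_le]
        rintro z ⟨w0, hw0, rfl⟩
        rcases hw0 with hw0 | hw0
        · rw [hw0]; exact hgG
        · rw [Set.mem_singleton_iff] at hw0
          rw [hw0]; exact huG
      have hKcert : aLCS K (c + 1) = ⊥ := aLCS_eq_bot_of_map K hKmap (c + 1) hc
      -- dimension bounds
      have hfrW : Module.finrank ℂ ↥W < Module.finrank ℂ V :=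
        Submodule.finrank_lt hWtop
      have hfrQ : Module.finrank ℂ (V ⧸ W) < Module.finrank ℂ V := by
        have hadd := Submodule.finrank_quotient_add_finrank W
        have hpos : 0 < Module.finrank ℂ ↥W := by
          rw [Module.finrank_pos_iff]
          exact Submodule.nontrivial_iff_ne_bot.mpr hWbot
        omega
      -- apply the dimension induction on W
      have hcomW : Commute (resHom W gS) (resHom W uS) := by
        refine ihN ↥W inferInstance inferInstance inferInstance (by omega) (c + 1) (Subgroup.map (resHom W) K) ?_
          (resHom W gS) (resHom W uS) (Subgroup.mem_map_of_mem _ hgK)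
          (Subgroup.mem_map_of_mem _ huK) ?_ ?_
        · rw [aLCS_map, hKcert, Subgroup.map_bot]
        · rw [resHom_val]
          exact diagble_restrict _ hgs
        · rw [resHom_val]
          exact unip_restrict _ huu
      have hcomQ : Commute (quotHom W gS) (quotHom W uS) := by
        refine ihN (V ⧸ W) inferInstance inferInstance inferInstance (by omega) (c + 1) (Subgroup.map (quotHom W) K) ?_
          (quotHom W gS) (quotHom W uS) (Subgroup.mem_map_of_mem _ hgK)
          (Subgroup.mem_map_of_mem _ huK) ?_ ?_
        · rw [aLCS_map, hKcert, Subgroup.map_bot]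
        · rw [quotHom_val]
          exact diagble_mapQ _ hgs
        · rw [quotHom_val]
          exact unip_mapQ _ huu
      -- the commutator acts trivially on W and V/W
      have hcoeGU : ((⁅gS, uS⁆ : ↥(stabSub W)) : (Module.End ℂ V)ˣ) = ⁅g, u⁆ := rfl
      have hWfix : ∀ w ∈ W, ((⁅g, u⁆ : (Module.End ℂ V)ˣ) : Module.End ℂ V) w = w := by
        intro w hw
        have h3 : resHom W ⁅gS, uS⁆ = 1 := by
          rw [map_commutatorElement]
          exact hcomW.commutator_eq
        have h4 := congrArg (fun z => ((z : (Module.End ℂ ↥W)ˣ) : Module.End ℂ ↥W) ⟨w, hw⟩) h3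
        simp only [Units.val_one, Module.End.one_apply] at h4
        have h5 := congrArg (Subtype.val) h4
        rw [resHom_val] at h5
        rw [← hcoeGU]
        rw [resF_apply] at h5
        exact h5
      have hQfix : ∀ v : V, ((⁅g, u⁆ : (Module.End ℂ V)ˣ) : Module.End ℂ V) v - v ∈ W := by
        intro v
        have h3 : quotHom W ⁅gS, uS⁆ = 1 := by
          rw [map_commutatorElement]
          exact hcomQ.commutator_eq
        have h4 := congrArg
          (fun z => ((z : (Module.End ℂ (V ⧸ W))ˣ) : Module.End ℂ (V ⧸ W))
            (Submodule.Quotient.mk v)) h3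
        simp only [Units.val_one, Module.End.one_apply] at h4
        rw [quotHom_val, quotF_apply] at h4
        rw [← hcoeGU]
        exact (Submodule.Quotient.eq W).mp h4
      -- the primary chain, iterated commutators with g
      have hp0 : chain u g 0 = u := chain_zero u g
      have hps : ∀ j, chain u g (j + 1) = ⁅chain u g j, g⁆ := chain_succ u g
      have hpmem : ∀ j, chain u g j ∈ aLCS G j := by
        intro j
        induction j with
        | zero => exact huG
        | succ j ih =>
          rw [hps j, aLCS_succ]
          exact Subgroup.commutator_mem_commutator ih hgG
      have hpc : chain u g (c + 1) = 1 := by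
        have h1 := hpmem (c + 1)
        rw [hc] at h1
        exact Subgroup.mem_bot.mp h1
      -- the class of automorphisms trivial on W and V/W
      set Tp : (Module.End ℂ V)ˣ → Prop := fun x =>
        (∀ w ∈ W, (x : Module.End ℂ V) w = w) ∧
        (∀ v : V, (x : Module.End ℂ V) v - v ∈ W) with hTpdef
      have hTmul : ∀ x y, Tp x → Tp y → Tp (x * y) := by
        intro x y hx hy
        constructor
        · intro w hw
          rw [Units.val_mul, Module.End.mul_apply, hy.1 w hw, hx.1 w hw]
        · intro v
          rw [Units.val_mul, Module.End.mul_apply]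
          have h1 : (y : Module.End ℂ V) v - v ∈ W := hy.2 v
          have h2 : (x : Module.End ℂ V) ((y : Module.End ℂ V) v - v)
              = (y : Module.End ℂ V) v - v := hx.1 _ h1
          have h3 : (x : Module.End ℂ V) ((y : Module.End ℂ V) v) - v
              = ((y : Module.End ℂ V) v - v) + ((x : Module.End ℂ V) v - v) := by
            rw [← h2, map_sub]
            abel
          rw [h3]
          exact add_mem h1 (hx.2 v)
      have hTinv : ∀ x, Tp x → Tp x⁻¹ := by
        intro x hx
        have hxinvw : ∀ w ∈ W, (↑x⁻¹ : Module.End ℂ V) w = w := by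
          intro w hw
          have h1 : (↑x⁻¹ : Module.End ℂ V) ((x : Module.End ℂ V) w) = w := by
            rw [← Module.End.mul_apply, ← Units.val_mul, inv_mul_cancel x, Units.val_one,
              Module.End.one_apply]
          rw [hx.1 w hw] at h1
          exact h1
        constructor
        · exact hxinvw
        · intro v
          have h1 : (↑x⁻¹ : Module.End ℂ V) v - v
              = -((↑x⁻¹ : Module.End ℂ V) (((x : Module.End ℂ V) v) - v)) := by
            rw [map_sub]
            have h2 : (↑x⁻¹ : Module.End ℂ V) ((x : Module.End ℂ V) v) = v := by
              rw [← Module.End.mul_apply, ← Units.val_mul, inv_mul_cancel x, Units.val_one,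
                Module.End.one_apply]
            rw [h2]
            abel
          rw [h1, hxinvw _ (hx.2 v)]
          exact neg_mem (hx.2 v)
      have hTconj : ∀ x z, x ∈ stabSub W → Tp z → Tp (x * z * x⁻¹) := by
        intro x z hxst hz
        have hxinvst : x⁻¹ ∈ stabSub W := inv_mem hxst
        constructor
        · intro w hw
          rw [Units.val_mul, Units.val_mul, Module.End.mul_apply, Module.End.mul_apply]
          have h1 : (↑x⁻¹ : Module.End ℂ V) w ∈ W := (mem_stabSub W).mp hxinvst w hw
          rw [hz.1 _ h1, ← Module.End.mul_apply, ← Units.val_mul, mul_inv_cancel x,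
            Units.val_one, Module.End.one_apply]
        · intro v
          rw [Units.val_mul, Units.val_mul, Module.End.mul_apply, Module.End.mul_apply]
          have h2 : (x * z * x⁻¹ : (Module.End ℂ V)ˣ) = x * z * x⁻¹ := rfl
          have h1 : (z : Module.End ℂ V) ((↑x⁻¹ : Module.End ℂ V) v)
              - (↑x⁻¹ : Module.End ℂ V) v ∈ W := hz.2 _
          have h3 : (x : Module.End ℂ V)
              ((z : Module.End ℂ V) ((↑x⁻¹ : Module.End ℂ V) v)) - v
              = (x : Module.End ℂ V)
                ((z : Module.End ℂ V) ((↑x⁻¹ : Module.End ℂ V) v)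
                  - (↑x⁻¹ : Module.End ℂ V) v) := by
            rw [map_sub]
            have h4 : (x : Module.End ℂ V) ((↑x⁻¹ : Module.End ℂ V) v) = v := by
              rw [← Module.End.mul_apply, ← Units.val_mul, mul_inv_cancel x, Units.val_one,
                Module.End.one_apply]
            rw [h4]
          rw [h3]
          exact (mem_stabSub W).mp hxst _ h1
      have hTgu : Tp ⁅g, u⁆ := ⟨hWfix, hQfix⟩
      have hT1 : Tp (chain u g 1) := by
        have h1 : chain u g 1 = ⁅g, u⁆⁻¹ := by
          rw [hps 0, hp0, commutatorElement_inv]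
        rw [h1]
        exact hTinv _ hTgu
      have hTall : ∀ j, Tp (chain u g (j + 1)) := by
        intro j
        induction j with
        | zero => exact hT1
        | succ j ih =>
          have key : chain u g (j + 2) = chain u g (j + 1) * (g * (chain u g (j + 1))⁻¹ * g⁻¹) := by
            rw [hps (j + 1), commutatorElement_def]
            group
          rw [key]
          exact hTmul _ _ ih (hTconj g _ hgW (hTinv _ ih))
      -- finish : find the first trivial element of the primary chain
      have hex2 : ∃ j, chain u g j = 1 := ⟨c + 1, hpc⟩
      haveI : DecidablePred fun j => chain u g j = 1 := Classical.decPred _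
      have hfind2 : chain u g (Nat.find hex2) = 1 := Nat.find_spec hex2
      rcases hN5 : Nat.find hex2 with _ | s1
      · rw [hN5, hp0] at hfind2
        rw [hfind2]
        exact Commute.one_right g
      rcases hN6 : s1 with _ | s'
      · rw [hN6] at hN5
        rw [hN5, hps 0, hp0] at hfind2
        exact (commutatorElement_eq_one_iff_commute.mp hfind2).symm
      rw [hN6] at hN5
      exfalso
      rw [hN5] at hfind2
      have ht1 : chain u g (s' + 1) ≠ 1 := Nat.find_min hex2 (by omega)
      have hTt : Tp (chain u g (s' + 1)) := hTall s'
      have hcomtg : Commute (chain u g (s' + 1)) g := by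
        apply commutatorElement_eq_one_iff_commute.mp
        rw [← hps (s' + 1)]
        exact hfind2
      have hunip_t : IsNilpotent (((chain u g (s' + 1) : (Module.End ℂ V)ˣ)) - 1 :
          Module.End ℂ V) := by
        refine ⟨2, ?_⟩
        apply LinearMap.ext
        intro v
        rw [pow_two, Module.End.mul_apply, LinearMap.zero_apply]
        have h1 : (((chain u g (s' + 1) : (Module.End ℂ V)ˣ) : Module.End ℂ V) - 1) v
            = ((chain u g (s' + 1) : (Module.End ℂ V)ˣ) : Module.End ℂ V) v - v := by
          rw [LinearMap.sub_apply, Module.End.one_apply]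
        rw [h1]
        have h2 : ((chain u g (s' + 1) : (Module.End ℂ V)ˣ) : Module.End ℂ V) v - v ∈ W :=
          hTt.2 v
        rw [LinearMap.sub_apply, Module.End.one_apply, hTt.1 _ h2, sub_self]
      have hdiag_t : Diagble ((chain u g (s' + 1) : (Module.End ℂ V)ˣ) : Module.End ℂ V) := by
        have h1 : Commute ⁅chain u g s', g⁆ g := by rw [← hps s']; exact hcomtg
        have h2 := diagble_commutator (x := chain u g s') hgs h1
        rw [← hps s'] at h2
        exact h2
      apply ht1
      apply Units.ext
      rw [Units.val_one]
      exact eq_one_of_diagble_unip hdiag_t hunip_t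

/-! ### Diagonal matrices are `Diagble` -/

lemma diagble_diagonal {n : ℕ} (d : Fin n → ℂ) :
    Diagble (Matrix.diagonal d : Matrix (Fin n) (Fin n) ℂ) := by
  classical
  refine ⟨Finset.image d Finset.univ, ?_⟩
  have hd : Matrix.diagonal d = Matrix.diagonalAlgHom (R := ℂ) d := rfl
  rw [hd, Polynomial.aeval_algHom_apply]
  have h0 : (Polynomial.aeval d) (∏ a ∈ Finset.image d Finset.univ, (X - C a))
      = (0 : Fin n → ℂ) := by
    funext i
    have h1 := Polynomial.aeval_algHom_apply (Pi.evalAlgHom ℂ (fun _ : Fin n => ℂ) i) d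
      (∏ a ∈ Finset.image d Finset.univ, (X - C a))
    have h2 : (Polynomial.aeval d (∏ a ∈ Finset.image d Finset.univ, (X - C a))) i
        = Polynomial.aeval (d i) (∏ a ∈ Finset.image d Finset.univ, (X - C a)) := h1.symm
    rw [Pi.zero_apply, h2, _root_.map_prod]
    refine Finset.prod_eq_zero (Finset.mem_image_of_mem d (Finset.mem_univ i)) ?_
    rw [map_sub, Polynomial.aeval_X, Polynomial.aeval_C]
    simp
  rw [h0, map_zero]

end NilpGLProof

open NilpGLProof Polynomial in
theorem semisimple_commutes_with_unipotent_in_nilpotent_linear_group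
    (n : ℕ) (G : Subgroup (GL (Fin n) ℂ)) (hG : Group.IsNilpotent ↥G)
    (g h : GL (Fin n) ℂ) (hg : g ∈ G) (hh : h ∈ G)
    (hgs : IsSemisimpleElt g) (hhu : IsUnipotentElt h) :
    g * h = h * g := by
  classical
  set e : Matrix (Fin n) (Fin n) ℂ ≃ₐ[ℂ] Module.End ℂ (Fin n → ℂ) :=
    Matrix.toLinAlgEquiv' with hedef
  set μ : (Matrix (Fin n) (Fin n) ℂ)ˣ ≃* (Module.End ℂ (Fin n → ℂ))ˣ :=
    Units.mapEquiv e.toRingEquiv.toMulEquiv with hμdef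
  -- certificate
  obtain ⟨c, hcert⟩ := nilpotent_iff_lowerCentralSeries.mp hG
  have hacert : aLCS G c = ⊥ := by
    have h1 := aLCS_le_map_lcs G c
    rw [hcert, Subgroup.map_bot] at h1
    exact le_bot_iff.mp h1
  set G' : Subgroup (Module.End ℂ (Fin n → ℂ))ˣ := Subgroup.map μ.toMonoidHom G with hG'def
  have hacert' : aLCS G' c = ⊥ := by
    rw [hG'def, aLCS_map, hacert, Subgroup.map_bot]
  -- diagonalizability at matrix level
  have hgmat : Diagble ((g : GL (Fin n) ℂ) : Matrix (Fin n) (Fin n) ℂ) := by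
    obtain ⟨P, hdiag⟩ := hgs
    have hD : Diagble ((↑(P⁻¹ * g * P) : Matrix (Fin n) (Fin n) ℂ)) := by
      have h1 := diagble_diagonal (Matrix.diag ((↑(P⁻¹ * g * P) : Matrix (Fin n) (Fin n) ℂ)))
      rwa [hdiag.diagonal_diag] at h1
    have h2 : g = P * (P⁻¹ * g * P) * P⁻¹ := by group
    have h3 : ((g : GL (Fin n) ℂ) : Matrix (Fin n) (Fin n) ℂ)
        = (P : Matrix (Fin n) (Fin n) ℂ) * (↑(P⁻¹ * g * P) : Matrix (Fin n) (Fin n) ℂ)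
          * ((P⁻¹ : GL (Fin n) ℂ) : Matrix (Fin n) (Fin n) ℂ) := by
      conv_lhs => rw [h2]
      rw [Units.val_mul, Units.val_mul]
    rw [h3]
    exact diagble_conj P hD
  -- transfer everything through μ
  have hval : ∀ x : GL (Fin n) ℂ,
      ((μ x : (Module.End ℂ (Fin n → ℂ))ˣ) : Module.End ℂ (Fin n → ℂ))
        = e ((x : GL (Fin n) ℂ) : Matrix (Fin n) (Fin n) ℂ) := fun x => rfl
  have hgs' : Diagble ((μ g : (Module.End ℂ (Fin n → ℂ))ˣ) : Module.End ℂ (Fin n → ℂ)) := by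
    rw [hval g]
    exact diagble_map e.toAlgHom hgmat
  have hhu' : IsNilpotent
      (((μ h : (Module.End ℂ (Fin n → ℂ))ˣ) : Module.End ℂ (Fin n → ℂ)) - 1) := by
    rw [hval h]
    have h1 : e ((h : GL (Fin n) ℂ) : Matrix (Fin n) (Fin n) ℂ) - 1
        = e (((h : GL (Fin n) ℂ) : Matrix (Fin n) (Fin n) ℂ) - 1) := by
      rw [map_sub, _root_.map_one]
    rw [h1]
    exact hhu.map e.toAlgHom.toRingHom
  have hcom : Commute (μ g) (μ h) := by
    refine theta (Module.finrank ℂ (Fin n → ℂ)) (Fin n → ℂ) inferInstance inferInstance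
      inferInstance le_rfl c G' hacert' (μ g) (μ h) ?_ ?_ hgs' hhu'
    · exact Subgroup.mem_map_of_mem _ hg
    · exact Subgroup.mem_map_of_mem _ hh
  have := μ.injective (by rw [_root_.map_mul, _root_.map_mul, hcom.eq] :
    μ (g * h) = μ (h * g))
  exact this
end
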